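/- arXiv:1905.06137 — 3 statements merged into one kernel-verified Lean document; each statement's English description precedes it below -/
import Mathlib

section
/- Let (Ω, 𝓕, μ) be a probability space and Γ a difference operator such that μ satisfies a Γ-mLSI(ρ) for some ρ > 0. Let f, g : Ω → ℝ be measurable functions with f in the admissible class, Γ(f) ≤ g pointwise, and suppose there exist c > 0, C ≥ 1 and K > 0 with μ(g ≥ c + t) ≤ C·exp(−t²/(2K²)) for all t ≥ 0. Then for all t ≥ 0, μ(f − E_μ f ≥ t) ≤ (4C/3)·exp(−t²/(8(ρc² + √ρ·K·t))). If Γ(a·f) = |a|·Γ(f) for all a ∈ ℝ, then the same bound holds with f replaced by −f. -/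
open MeasureTheory Real Filter Set Topology


lemma young_aux (x y : ℝ) (hy : 0 ≤ y) : x * y ≤ Real.exp x + (y * Real.log y - y) := by
  rcases hy.eq_or_lt with h | h
  · simp [← h]
    positivity
  · have h1 : x - Real.log y + 1 ≤ Real.exp (x - Real.log y) := Real.add_one_le_exp _
    have h2 : y * (x - Real.log y + 1) ≤ y * Real.exp (x - Real.log y) :=
      mul_le_mul_of_nonneg_left h1 hy
    have h3 : y * Real.exp (x - Real.log y) = Real.exp x := by
      rw [Real.exp_sub, Real.exp_log h]
      field_simp
    nlinarith [h2, h3]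

lemma bdd_integrable {Ω : Type*} [MeasurableSpace Ω] (μ : Measure Ω) [IsFiniteMeasure μ]
    {h : Ω → ℝ} (hm : Measurable h) {D : ℝ} (hD : ∀ x, |h x| ≤ D) : Integrable h μ := by
  refine (integrable_const D).mono' hm.aestronglyMeasurable (ae_of_all _ fun x => ?_)
  simpa [Real.norm_eq_abs] using hD x

lemma entropy_dual {Ω : Type*} [MeasurableSpace Ω] (μ : Measure Ω) [IsProbabilityMeasure μ]
    (u v : Ω → ℝ) (hv : ∀ x, 0 < v x)
    (hvi : Integrable v μ) (hvlogi : Integrable (fun x => v x * Real.log (v x)) μ)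
    (huvi : Integrable (fun x => u x * v x) μ) (heui : Integrable (fun x => Real.exp (u x)) μ)
    (hspos : 0 < ∫ x, v x ∂μ) (hTpos : 0 < ∫ x, Real.exp (u x) ∂μ) :
    ∫ x, u x * v x ∂μ ≤
      ((∫ x, v x * Real.log (v x) ∂μ) - (∫ x, v x ∂μ) * Real.log (∫ x, v x ∂μ))
        + (∫ x, v x ∂μ) * Real.log (∫ x, Real.exp (u x) ∂μ) := by
  set s := ∫ x, v x ∂μ with hs
  set T := ∫ x, Real.exp (u x) ∂μ with hT
  set m := Real.log T with hm
  have key : ∀ x, (u x - m) * v x ≤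
      (s / T) * Real.exp (u x) + (v x * Real.log (v x) - (Real.log s) * v x - v x) := by
    intro x
    have h1 := young_aux (u x - m) (v x / s) (div_pos (hv x) hspos).le
    have h2 : Real.exp (u x - m) = Real.exp (u x) / T := by
      rw [Real.exp_sub, hm, Real.exp_log hTpos]
    have h3 : Real.log (v x / s) = Real.log (v x) - Real.log s :=
      Real.log_div (hv x).ne' hspos.ne'
    rw [h2, h3] at h1
    calc (u x - m) * v x = s * ((u x - m) * (v x / s)) := by
          field_simp
      _ ≤ s * (Real.exp (u x) / T + (v x / s * (Real.log (v x) - Real.log s) - v x / s)) :=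
          mul_le_mul_of_nonneg_left h1 hspos.le
      _ = (s / T) * Real.exp (u x) + (v x * Real.log (v x) - (Real.log s) * v x - v x) := by
          field_simp
  have ivs : Integrable (fun x => Real.log s * v x) μ := hvi.const_mul _
  have ivm : Integrable (fun x => m * v x) μ := hvi.const_mul _
  have i2 : Integrable (fun x => v x * Real.log (v x) - Real.log s * v x) μ := hvlogi.sub ivs
  have i3 : Integrable (fun x => v x * Real.log (v x) - Real.log s * v x - v x) μ := i2.sub hvi
  have ie : Integrable (fun x => s / T * Real.exp (u x)) μ := heui.const_mul _
  have hlhs : Integrable (fun x => (u x - m) * v x) μ := by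
    have he : (fun x => (u x - m) * v x) = fun x => u x * v x - m * v x := by
      funext x; ring
    rw [he]; exact huvi.sub ivm
  have hrhs : Integrable (fun x =>
      (s / T) * Real.exp (u x) + (v x * Real.log (v x) - (Real.log s) * v x - v x)) μ :=
    ie.add i3
  have hint := integral_mono hlhs hrhs key
  have hL : ∫ x, (u x - m) * v x ∂μ = (∫ x, u x * v x ∂μ) - m * s := by
    have he : (fun x => (u x - m) * v x) = fun x => u x * v x - m * v x := by
      funext x; ring
    rw [he, integral_sub huvi ivm, integral_const_mul]
  have hR : ∫ x, ((s / T) * Real.exp (u x)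
        + (v x * Real.log (v x) - (Real.log s) * v x - v x)) ∂μ
      = s + ((∫ x, v x * Real.log (v x) ∂μ) - (Real.log s) * s - s) := by
    rw [integral_add ie i3, integral_sub i2 hvi, integral_sub hvlogi ivs,
      integral_const_mul, integral_const_mul]
    have hTT : s / T * T = s := by field_simp
    rw [hTT]
  rw [hL, hR] at hint
  nlinarith [hint]


lemma gauss_moment {a : ℝ} (ha : 0 < a) :
    ∫ t in Set.Ioi (0:ℝ), t * Real.exp (-a * t ^ 2) = (2 * a)⁻¹ := by
  have hderiv : ∀ x ∈ Set.Ici (0:ℝ),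
      HasDerivAt (fun t => -(2*a)⁻¹ * Real.exp (-a * t ^ 2)) (x * Real.exp (-a * x ^ 2)) x := by
    intro x _
    have h1 : HasDerivAt (fun t : ℝ => -a * t ^ 2) (-a * (2 * x ^ 1)) x :=
      (hasDerivAt_pow 2 x).const_mul (-a)
    have h2 := (h1.exp).const_mul (-(2*a)⁻¹)
    refine h2.congr_deriv ?_
    field_simp
  have hint : IntegrableOn (fun t : ℝ => t * Real.exp (-a * t ^ 2)) (Set.Ioi 0) :=
    (integrable_mul_exp_neg_mul_sq ha).integrableOn
  have htends : Tendsto (fun t : ℝ => -(2*a)⁻¹ * Real.exp (-a * t ^ 2)) atTop (𝓝 0) := by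
    have h1 : Tendsto (fun t : ℝ => a * t ^ 2) atTop atTop :=
      Tendsto.const_mul_atTop ha (tendsto_pow_atTop two_ne_zero)
    have h2 : Tendsto (fun t : ℝ => -a * t ^ 2) atTop atBot := by
      have he : (fun t : ℝ => -a * t ^ 2) = fun t : ℝ => -(a * t ^ 2) := by
        funext t; ring
      rw [he]
      exact tendsto_neg_atTop_atBot.comp h1
    have h3 : Tendsto (fun t : ℝ => Real.exp (-a * t ^ 2)) atTop (𝓝 0) :=
      Real.tendsto_exp_atBot.comp h2
    have := h3.const_mul (-(2*a)⁻¹)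
    simpa using this
  have := integral_Ioi_of_hasDerivAt_of_tendsto' hderiv hint htends
  rw [this]
  simp


lemma exp_sq_tail {Ω : Type*} [MeasurableSpace Ω] (μ : Measure Ω) [IsProbabilityMeasure μ]
    (X : Ω → ℝ) (hXm : Measurable X) (hXnn : ∀ x, 0 ≤ X x) (C K : ℝ) (hC : 0 ≤ C) (hK : 0 < K)
    (htail : ∀ t : ℝ, 0 < t → (μ {x | t ≤ X x}).toReal ≤ C * Real.exp (-t ^ 2 / (2 * K ^ 2))) :
    Integrable (fun x => Real.exp ((8 * K ^ 2)⁻¹ * X x ^ 2)) μ ∧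
      ∫ x, Real.exp ((8 * K ^ 2)⁻¹ * X x ^ 2) ∂μ ≤ 1 + C / 3 := by
  set β : ℝ := (8 * K ^ 2)⁻¹ with hβ
  have hβpos : 0 < β := by positivity
  have hgc : Continuous (fun t : ℝ => 2 * β * t * Real.exp (β * t ^ 2)) := by
    continuity
  -- fundamental theorem of calculus
  have hFTC : ∀ y : ℝ, ∫ t in (0:ℝ)..y, 2 * β * t * Real.exp (β * t ^ 2)
      = Real.exp (β * y ^ 2) - 1 := by
    intro y
    have hd : ∀ t : ℝ, HasDerivAt (fun r => Real.exp (β * r ^ 2))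
        (2 * β * t * Real.exp (β * t ^ 2)) t := by
      intro t
      have h1 : HasDerivAt (fun r : ℝ => β * r ^ 2) (β * (2 * t ^ 1)) t :=
        (hasDerivAt_pow 2 t).const_mul β
      have h2 := h1.exp
      convert h2 using 1
      ring
    have := intervalIntegral.integral_eq_sub_of_hasDerivAt (fun t _ => hd t)
      (hgc.intervalIntegrable 0 y)
    rw [this]
    simp
  -- layer cake
  have lc := lintegral_comp_eq_lintegral_meas_le_mul μ (f := X)
      (g := fun t => 2 * β * t * Real.exp (β * t ^ 2))
      (Filter.Eventually.of_forall hXnn) hXm.aemeasurable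
      (fun t _ => hgc.intervalIntegrable 0 t) ?gnn
  case gnn =>
    filter_upwards [ae_restrict_mem measurableSet_Ioi] with t ht
    have : (0:ℝ) < t := ht
    positivity
  -- rewrite LHS of layer cake
  have hlhs : ∫⁻ x, ENNReal.ofReal (∫ t in (0:ℝ)..X x, 2 * β * t * Real.exp (β * t ^ 2)) ∂μ
      = ∫⁻ x, ENNReal.ofReal (Real.exp (β * X x ^ 2) - 1) ∂μ := by
    congr 1
    funext x
    rw [hFTC]
  -- bound RHS of layer cake
  set a : ℝ := 3 / (8 * K ^ 2) with ha
  have hapos : 0 < a := by positivity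
  have hpoint : ∀ t : ℝ, 0 < t →
      C * Real.exp (-t ^ 2 / (2 * K ^ 2)) * (2 * β * t * Real.exp (β * t ^ 2))
        = (2 * β * C) * (t * Real.exp (-a * t ^ 2)) := by
    intro t _
    have : -t ^ 2 / (2 * K ^ 2) + β * t ^ 2 = -a * t ^ 2 := by
      rw [hβ, ha]; field_simp; ring
    calc C * Real.exp (-t ^ 2 / (2 * K ^ 2)) * (2 * β * t * Real.exp (β * t ^ 2))
        = (2 * β * C) * (t * (Real.exp (-t ^ 2 / (2 * K ^ 2)) * Real.exp (β * t ^ 2))) := by ring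
      _ = (2 * β * C) * (t * Real.exp (-a * t ^ 2)) := by
          rw [← Real.exp_add, this]
  have hIa : IntegrableOn (fun t : ℝ => (2 * β * C) * (t * Real.exp (-a * t ^ 2))) (Ioi 0) :=
    ((integrable_mul_exp_neg_mul_sq hapos).integrableOn).const_mul _
  have hval : ∫ t in Ioi (0:ℝ), (2 * β * C) * (t * Real.exp (-a * t ^ 2)) = C / 3 := by
    rw [integral_const_mul, gauss_moment hapos, hβ, ha]
    field_simp
  have hrhs : (∫⁻ t in Ioi (0:ℝ), μ {x | t ≤ X x}
        * ENNReal.ofReal (2 * β * t * Real.exp (β * t ^ 2)))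
      ≤ ENNReal.ofReal (C / 3) := by
    have step1 : (∫⁻ t in Ioi (0:ℝ), μ {x | t ≤ X x}
          * ENNReal.ofReal (2 * β * t * Real.exp (β * t ^ 2)))
        ≤ ∫⁻ t in Ioi (0:ℝ),
            ENNReal.ofReal ((2 * β * C) * (t * Real.exp (-a * t ^ 2))) := by
      apply lintegral_mono_ae
      filter_upwards [ae_restrict_mem measurableSet_Ioi] with t ht
      have htpos : (0:ℝ) < t := ht
      have h1 : μ {x | t ≤ X x} ≤ ENNReal.ofReal (C * Real.exp (-t ^ 2 / (2 * K ^ 2))) := by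
        rw [← ENNReal.ofReal_toReal (measure_ne_top μ _)]
        exact ENNReal.ofReal_le_ofReal (htail t htpos)
      calc μ {x | t ≤ X x} * ENNReal.ofReal (2 * β * t * Real.exp (β * t ^ 2))
          ≤ ENNReal.ofReal (C * Real.exp (-t ^ 2 / (2 * K ^ 2)))
              * ENNReal.ofReal (2 * β * t * Real.exp (β * t ^ 2)) :=
            mul_le_mul_left h1 _
        _ = ENNReal.ofReal (C * Real.exp (-t ^ 2 / (2 * K ^ 2))
              * (2 * β * t * Real.exp (β * t ^ 2))) := by
            rw [← ENNReal.ofReal_mul (by positivity)]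
        _ = ENNReal.ofReal ((2 * β * C) * (t * Real.exp (-a * t ^ 2))) := by
            rw [hpoint t htpos]
    have step2 : (∫⁻ t in Ioi (0:ℝ),
          ENNReal.ofReal ((2 * β * C) * (t * Real.exp (-a * t ^ 2))))
        = ENNReal.ofReal (C / 3) := by
      rw [← ofReal_integral_eq_lintegral_ofReal hIa ?nn, hval]
      case nn =>
        filter_upwards [ae_restrict_mem measurableSet_Ioi] with t ht
        have : (0:ℝ) < t := ht
        positivity
    exact step1.trans_eq step2
  have hmain : ∫⁻ x, ENNReal.ofReal (Real.exp (β * X x ^ 2) - 1) ∂μ ≤ ENNReal.ofReal (C / 3) :=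
    by rw [← hlhs, lc]; exact hrhs
  -- total lintegral bound
  have hsplit : ∫⁻ x, ENNReal.ofReal (Real.exp (β * X x ^ 2)) ∂μ
      ≤ ENNReal.ofReal (C / 3) + 1 := by
    have he : ∀ x, ENNReal.ofReal (Real.exp (β * X x ^ 2))
        = ENNReal.ofReal (Real.exp (β * X x ^ 2) - 1) + ENNReal.ofReal 1 := by
      intro x
      rw [← ENNReal.ofReal_add (by
        have : (1:ℝ) ≤ Real.exp (β * X x ^ 2) := Real.one_le_exp (by positivity)
        linarith) zero_le_one]
      norm_num
    calc ∫⁻ x, ENNReal.ofReal (Real.exp (β * X x ^ 2)) ∂μ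
        = ∫⁻ x, (ENNReal.ofReal (Real.exp (β * X x ^ 2) - 1) + ENNReal.ofReal 1) ∂μ := by
          congr 1; funext x; rw [he]
      _ = (∫⁻ x, ENNReal.ofReal (Real.exp (β * X x ^ 2) - 1) ∂μ) + ENNReal.ofReal 1 := by
          rw [lintegral_add_right _ measurable_const, lintegral_const]
          simp
      _ ≤ ENNReal.ofReal (C / 3) + 1 := by
          rw [ENNReal.ofReal_one]
          exact add_le_add_left hmain _
  have hmeas : Measurable (fun x => Real.exp (β * X x ^ 2)) :=
    (((hXm.pow_const 2).const_mul β).exp)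
  have hInt : Integrable (fun x => Real.exp (β * X x ^ 2)) μ := by
    refine ⟨hmeas.aestronglyMeasurable, ?_⟩
    rw [hasFiniteIntegral_iff_ofReal (Filter.Eventually.of_forall fun x => (Real.exp_pos _).le)]
    exact lt_of_le_of_lt hsplit (by finiteness)
  refine ⟨hInt, ?_⟩
  have heq : ∫ x, Real.exp (β * X x ^ 2) ∂μ
      = (∫⁻ x, ENNReal.ofReal (Real.exp (β * X x ^ 2)) ∂μ).toReal :=
    integral_eq_lintegral_of_nonneg_ae (Filter.Eventually.of_forall fun x => (Real.exp_pos _).le)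
      hmeas.aestronglyMeasurable
  rw [heq]
  calc (∫⁻ x, ENNReal.ofReal (Real.exp (β * X x ^ 2)) ∂μ).toReal
      ≤ (ENNReal.ofReal (C / 3) + 1).toReal := by
        apply ENNReal.toReal_mono (by finiteness) hsplit
    _ = C / 3 + 1 := by
        rw [ENNReal.toReal_add (by finiteness) (by finiteness)]
        simp [ENNReal.toReal_ofReal (by positivity : (0:ℝ) ≤ C / 3)]
    _ ≤ 1 + C / 3 := by linarith


lemma phi_hasDeriv {Ω : Type*} [MeasurableSpace Ω] (μ : Measure Ω) [IsProbabilityMeasure μ]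
    (f : Ω → ℝ) (hfm : Measurable f) (B : ℝ) (hB0 : 0 ≤ B) (hB : ∀ x, |f x| ≤ B) (s0 : ℝ) :
    HasDerivAt (fun s => ∫ x, Real.exp (s * f x) ∂μ)
      (∫ x, Real.exp (s0 * f x) * f x ∂μ) s0 := by
  have key : ∀ (s : ℝ) (x : Ω), Real.exp (s * f x) ≤ Real.exp (|s| * B) := by
    intro s x
    apply Real.exp_le_exp.mpr
    calc s * f x ≤ |s * f x| := le_abs_self _
      _ = |s| * |f x| := abs_mul _ _
      _ ≤ |s| * B := mul_le_mul_of_nonneg_left (hB x) (abs_nonneg s)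
  have h := hasDerivAt_integral_of_dominated_loc_of_deriv_le (μ := μ)
    (F := fun s x => Real.exp (s * f x)) (F' := fun s x => Real.exp (s * f x) * f x)
    (x₀ := s0) (bound := fun _ => Real.exp ((|s0| + 1) * B) * B) (Metric.ball_mem_nhds s0 one_pos)
    (Filter.Eventually.of_forall fun s => ((hfm.const_mul s).exp).aestronglyMeasurable)
    (bdd_integrable μ ((hfm.const_mul s0).exp) (D := Real.exp (|s0| * B)) (fun x => by
      rw [abs_of_pos (Real.exp_pos _)]; exact key s0 x))
    (((hfm.const_mul s0).exp.mul hfm).aestronglyMeasurable)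
    (Filter.Eventually.of_forall fun x => fun s hs => ?_)
    (integrable_const _)
    (Filter.Eventually.of_forall fun x => fun s _ => ?_)
  · exact h.2
  · have hs1 : |s| ≤ |s0| + 1 := by
      have := mem_ball_iff_norm.mp hs
      rw [Real.norm_eq_abs] at this
      calc |s| = |s0 + (s - s0)| := by ring_nf
        _ ≤ |s0| + |s - s0| := abs_add_le _ _
        _ ≤ |s0| + 1 := by linarith
    rw [Real.norm_eq_abs, abs_mul, abs_of_pos (Real.exp_pos _)]
    calc Real.exp (s * f x) * |f x| ≤ Real.exp (|s| * B) * B := by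
          apply mul_le_mul (key s x) (hB x) (abs_nonneg _) (Real.exp_pos _).le
      _ ≤ Real.exp ((|s0| + 1) * B) * B := by
          apply mul_le_mul_of_nonneg_right _ hB0
          exact Real.exp_le_exp.mpr (mul_le_mul_of_nonneg_right hs1 hB0)
  · exact (hasDerivAt_mul_const (f x)).exp

lemma selfBound (E' P' L' th rc : ℝ) (hP : 0 < P') (hth : 0 ≤ th) (hL : 0 ≤ L')
    (hthh : th ≤ 1 / 2) (hrc : 0 ≤ rc)
    (hE : E' ≤ rc * P' + th * E' + th * (P' * L')) :
    E' ≤ 2 * (rc * P') + 2 * (th * (P' * L')) := by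
  have h1 : 0 ≤ rc * P' := mul_nonneg hrc hP.le
  have h2 : 0 ≤ th * (P' * L') := mul_nonneg hth (mul_nonneg hP.le hL)
  rcases le_or_gt E' 0 with h0 | h0
  · linarith
  · have h3 : th * E' ≤ 1 / 2 * E' := mul_le_mul_of_nonneg_right hthh h0.le
    linarith

lemma coef16 (rr KK lam bb : ℝ) (hr : 0 < rr) (hK : 0 < KK) (hb : 0 < bb)
    (hb2 : bb ^ 2 = rr * KK ^ 2) (h0 : 0 ≤ lam) (h4 : lam ≤ (4 * bb)⁻¹) :
    16 * rr * KK ^ 2 * lam ^ 2 ≤ 1 := by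
  have h1 : lam ^ 2 ≤ ((4 * bb)⁻¹) ^ 2 := pow_le_pow_left₀ h0 h4 2
  have h2 : ((4 * bb)⁻¹) ^ 2 = (16 * bb ^ 2)⁻¹ := by
    rw [inv_pow, mul_pow]; norm_num
  rw [h2, hb2] at h1
  have h3 : (0:ℝ) < 16 * (rr * KK ^ 2) := by positivity
  rw [inv_eq_one_div, le_div_iff₀ h3] at h1
  nlinarith [h1]

lemma quad_ineq (z w : ℝ) (hw : 0 < w) (hz : w < z) : z ^ 2 ≤ (2 * z - w) * (w + z) := by
  nlinarith [mul_lt_mul_of_pos_left hz hw, sq_nonneg z]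





set_option maxHeartbeats 1000000 in
lemma main_tail {Ω : Type*} [MeasurableSpace Ω] (μ : Measure Ω) [IsProbabilityMeasure μ]
    (ρ : ℝ) (hρ : 0 < ρ) (f g GF : Ω → ℝ) (hfm : Measurable f)
    (B : ℝ) (hB0 : 0 ≤ B) (hB : ∀ x, |f x| ≤ B)
    (hGFm : Measurable GF) (hGFnn : ∀ x, 0 ≤ GF x) (hgm : Measurable g)
    (hfg : ∀ x, GF x ≤ g x)
    (c C K : ℝ) (hc : 0 < c) (hC : 1 ≤ C) (hK : 0 < K)
    (hsub : ∀ t : ℝ, 0 ≤ t → (μ {x | c + t ≤ g x}).toReal ≤ C * Real.exp (-t ^ 2 / (2 * K ^ 2)))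
    (hEnt : ∀ s : ℝ, 0 ≤ s →
      (∫ x, (s * f x) * Real.exp (s * f x) ∂μ)
          - (∫ x, Real.exp (s * f x) ∂μ) * Real.log (∫ x, Real.exp (s * f x) ∂μ)
        ≤ ρ / 2 * ∫ x, (s * GF x) ^ 2 * Real.exp (s * f x) ∂μ) :
    ∀ t : ℝ, 0 ≤ t → (μ {x | t ≤ f x - ∫ y, f y ∂μ}).toReal
        ≤ 4 * C / 3 * Real.exp (-t ^ 2 / (8 * (ρ * c ^ 2 + Real.sqrt ρ * K * t))) := by
  have hC0 : (0:ℝ) ≤ C := by linarith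
  set b : ℝ := Real.sqrt ρ * K with hbdef
  have hbpos : 0 < b := mul_pos (Real.sqrt_pos.mpr hρ) hK
  have hb2 : b ^ 2 = ρ * K ^ 2 := by
    rw [hbdef, mul_pow, Real.sq_sqrt hρ.le]
  -- the nonnegative dominating function X and its exponential moment
  set X : Ω → ℝ := fun x => max (g x - c) 0 with hXdef
  have hXm : Measurable X := (hgm.sub measurable_const).max measurable_const
  have hXnn : ∀ x, 0 ≤ X x := fun x => le_max_right _ _
  have hgnn : ∀ x, 0 ≤ g x := fun x => le_trans (hGFnn x) (hfg x)
  have htail : ∀ s : ℝ, 0 < s → (μ {x | s ≤ X x}).toReal ≤ C * Real.exp (-s ^ 2 / (2 * K ^ 2)) := by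
    intro s hs
    have hset : {x | s ≤ X x} = {x | c + s ≤ g x} := by
      ext x
      simp only [Set.mem_setOf_eq, hXdef, le_max_iff]
      constructor
      · rintro (h | h)
        · linarith
        · linarith
      · intro h; left; linarith
    rw [hset]
    exact hsub s hs.le
  obtain ⟨hMint, hMle⟩ := exp_sq_tail μ X hXm hXnn C K hC0 hK htail
  set u : Ω → ℝ := fun x => (8 * K ^ 2)⁻¹ * X x ^ 2 with hudef
  set M : ℝ := ∫ x, Real.exp (u x) ∂μ with hMdef
  have hM1 : (1:ℝ) ≤ M := by
    have h1 : (1:ℝ) = ∫ _x, (1:ℝ) ∂μ := by simp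
    rw [hMdef, h1]
    apply integral_mono (integrable_const 1) hMint
    intro x
    exact Real.one_le_exp (by positivity)
  have hMpos : 0 < M := lt_of_lt_of_le one_pos hM1
  have hlogM : 0 ≤ Real.log M := Real.log_nonneg hM1
  -- the mgf and its logarithm
  set φ : ℝ → ℝ := fun s => ∫ x, Real.exp (s * f x) ∂μ with hφdef
  set ψ : ℝ → ℝ := fun s => ∫ x, Real.exp (s * f x) * f x ∂μ with hψdef
  have hsfB : ∀ (s : ℝ) (x : Ω), s * f x ≤ |s| * B := by
    intro s x
    calc s * f x ≤ |s * f x| := le_abs_self _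
      _ = |s| * |f x| := abs_mul _ _
      _ ≤ |s| * B := mul_le_mul_of_nonneg_left (hB x) (abs_nonneg s)
  have hsfB' : ∀ (s : ℝ) (x : Ω), -(|s| * B) ≤ s * f x := by
    intro s x
    have := hsfB (-s) x
    rw [abs_neg] at this
    nlinarith [this]
  have hei : ∀ s : ℝ, Integrable (fun x => Real.exp (s * f x)) μ := by
    intro s
    apply bdd_integrable μ ((hfm.const_mul s).exp) (D := Real.exp (|s| * B))
    intro x
    rw [abs_of_pos (Real.exp_pos _)]
    exact Real.exp_le_exp.mpr (hsfB s x)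
  have hφpos : ∀ s, 0 < φ s := by
    intro s
    have h1 : Real.exp (-(|s| * B)) = ∫ _x, Real.exp (-(|s| * B)) ∂μ := by simp
    calc (0:ℝ) < Real.exp (-(|s| * B)) := Real.exp_pos _
      _ = ∫ _x, Real.exp (-(|s| * B)) ∂μ := h1
      _ ≤ φ s := integral_mono (integrable_const _) (hei s)
          (fun x => Real.exp_le_exp.mpr (hsfB' s x))
  have hφd : ∀ s, HasDerivAt φ (ψ s) s := fun s => phi_hasDeriv μ f hfm B hB0 hB s
  set F : ℝ → ℝ := fun s => Real.log (φ s) with hFdef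
  have hFd : ∀ s, HasDerivAt F (ψ s / φ s) s := fun s => (hφd s).log (hφpos s).ne'
  have hφ0 : φ 0 = 1 := by simp [hφdef]
  have hF0 : F 0 = 0 := by rw [hFdef]; simp [hφ0]
  have hψ0 : ψ 0 = ∫ x, f x ∂μ := by simp [hψdef]
  set κ : ℝ := 2 * ρ * c ^ 2 + 16 * ρ * K ^ 2 * Real.log M with hκdef
  have hκ0 : 0 ≤ κ := by
    rw [hκdef]
    exact add_nonneg (by positivity) (mul_nonneg (by positivity) hlogM)
  -- the entropy bound
  have entStep : ∀ s : ℝ, 0 < s → s ≤ (4 * b)⁻¹ →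
      s * ψ s - φ s * Real.log (φ s) ≤ κ * s ^ 2 * φ s := by
    intro s hs hs4
    have h1 := hEnt s hs.le
    -- rewrite LHS of h1
    have e1 : ∫ x, (s * f x) * Real.exp (s * f x) ∂μ = s * ψ s := by
      rw [hψdef, ← integral_const_mul]
      exact integral_congr_ae (ae_of_all _ fun x => by ring)
    -- pointwise domination facts
    have hX2le : ∀ x, X x ^ 2 ≤ 8 * K ^ 2 * Real.exp (u x) := by
      intro x
      have h2 : u x ≤ Real.exp (u x) := by
        nlinarith [Real.add_one_le_exp (u x)]
      have h3 : X x ^ 2 = 8 * K ^ 2 * u x := by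
        rw [hudef]; field_simp
      nlinarith [h3, h2]
    have hgX : ∀ x, g x ≤ c + X x := fun x => by
      have : g x - c ≤ X x := le_max_left _ _
      linarith
    have hg2 : ∀ x, g x ^ 2 ≤ 2 * c ^ 2 + 2 * X x ^ 2 := by
      intro x
      nlinarith [hgX x, hgnn x, hXnn x, hc.le, sq_nonneg (c - X x)]
    -- integrability facts
    have hexple : ∀ x, Real.exp (s * f x) ≤ Real.exp (|s| * B) :=
      fun x => Real.exp_le_exp.mpr (hsfB s x)
    have hWint : Integrable (fun x => (2 * c ^ 2 + 2 * (8 * K ^ 2) * Real.exp (u x))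
        * Real.exp (|s| * B)) μ :=
      (((integrable_const (2 * c ^ 2)).add (hMint.const_mul (2 * (8 * K ^ 2)))).mul_const _)
    have hg2e_int : Integrable (fun x => g x ^ 2 * Real.exp (s * f x)) μ := by
      apply hWint.mono' (((hgm.pow_const 2).mul ((hfm.const_mul s).exp)).aestronglyMeasurable)
      apply ae_of_all
      intro x
      simp only [Pi.mul_apply]
      rw [Real.norm_eq_abs, abs_of_nonneg (mul_nonneg (sq_nonneg (g x)) (Real.exp_pos _).le)]
      calc g x ^ 2 * Real.exp (s * f x)
          ≤ (2 * c ^ 2 + 2 * X x ^ 2) * Real.exp (|s| * B) := by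
            apply mul_le_mul (hg2 x) (hexple x) (Real.exp_pos _).le
            nlinarith [hXnn x, hc.le]
        _ ≤ (2 * c ^ 2 + 2 * (8 * K ^ 2) * Real.exp (u x)) * Real.exp (|s| * B) := by
            apply mul_le_mul_of_nonneg_right _ (Real.exp_pos _).le
            nlinarith [hX2le x]
    have hGF2e_int : Integrable (fun x => GF x ^ 2 * Real.exp (s * f x)) μ := by
      apply hg2e_int.mono' (((hGFm.pow_const 2).mul ((hfm.const_mul s).exp)).aestronglyMeasurable)
      apply ae_of_all
      intro x
      simp only [Pi.mul_apply]
      rw [Real.norm_eq_abs, abs_of_nonneg (mul_nonneg (sq_nonneg (GF x)) (Real.exp_pos _).le)]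
      apply mul_le_mul_of_nonneg_right _ (Real.exp_pos _).le
      nlinarith [hfg x, hGFnn x]
    have hX2e_int : Integrable (fun x => X x ^ 2 * Real.exp (s * f x)) μ := by
      apply hg2e_int.mono' (((hXm.pow_const 2).mul ((hfm.const_mul s).exp)).aestronglyMeasurable)
      apply ae_of_all
      intro x
      simp only [Pi.mul_apply]
      rw [Real.norm_eq_abs, abs_of_nonneg (mul_nonneg (sq_nonneg (X x)) (Real.exp_pos _).le)]
      apply mul_le_mul_of_nonneg_right _ (Real.exp_pos _).le
      have hXg : X x ≤ g x := by
        apply max_le _ (hgnn x)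
        linarith [hc]
      nlinarith [hXnn x, hXg]
    -- step A : the mLSI right-hand side
    have e2 : ∫ x, (s * GF x) ^ 2 * Real.exp (s * f x) ∂μ
        = s ^ 2 * ∫ x, GF x ^ 2 * Real.exp (s * f x) ∂μ := by
      rw [← integral_const_mul]
      exact integral_congr_ae (ae_of_all _ fun x => by ring)
    have stepA : ∫ x, GF x ^ 2 * Real.exp (s * f x) ∂μ
        ≤ ∫ x, g x ^ 2 * Real.exp (s * f x) ∂μ := by
      apply integral_mono hGF2e_int hg2e_int
      intro x
      apply mul_le_mul_of_nonneg_right _ (Real.exp_pos _).le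
      nlinarith [hfg x, hGFnn x]
    -- step B : split g² ≤ 2c² + 2X²
    have stepB : ∫ x, g x ^ 2 * Real.exp (s * f x) ∂μ
        ≤ 2 * c ^ 2 * φ s + 2 * ∫ x, X x ^ 2 * Real.exp (s * f x) ∂μ := by
      have hrhs_int : Integrable
          (fun x => 2 * c ^ 2 * Real.exp (s * f x) + 2 * (X x ^ 2 * Real.exp (s * f x))) μ :=
        ((hei s).const_mul _).add (hX2e_int.const_mul _)
      have h2 := integral_mono hg2e_int hrhs_int (fun x => by
        nlinarith [hg2 x, (Real.exp_pos (s * f x)).le, hXnn x])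
      rw [integral_add ((hei s).const_mul _) (hX2e_int.const_mul _),
        integral_const_mul, integral_const_mul] at h2
      exact h2
    -- step C : entropy duality applied to u and v = exp(s f)
    have huv_int : Integrable (fun x => u x * Real.exp (s * f x)) μ := by
      apply (hMint.mul_const (Real.exp (|s| * B))).mono'
        (((((hXm.pow_const 2).const_mul _)).mul ((hfm.const_mul s).exp)).aestronglyMeasurable)
      apply ae_of_all
      intro x
      simp only [Pi.mul_apply]
      rw [Real.norm_eq_abs, abs_of_nonneg (mul_nonneg (mul_nonneg (inv_nonneg.mpr (by positivity : (0:ℝ) ≤ 8 * K ^ 2)) (sq_nonneg (X x))) (Real.exp_pos _).le)]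
      have h4 : u x ≤ Real.exp (u x) := by nlinarith [Real.add_one_le_exp (u x)]
      apply mul_le_mul h4 (hexple x) (Real.exp_pos _).le (Real.exp_pos _).le
    have hvlog_int : Integrable
        (fun x => Real.exp (s * f x) * Real.log (Real.exp (s * f x))) μ := by
      apply bdd_integrable μ (D := Real.exp (|s| * B) * (|s| * B))
      · exact ((hfm.const_mul s).exp.mul ((hfm.const_mul s).exp.log))
      · intro x
        rw [Real.log_exp, abs_mul, abs_of_pos (Real.exp_pos _)]
        apply mul_le_mul (hexple x) _ (abs_nonneg _) (Real.exp_pos _).le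
        calc |s * f x| = |s| * |f x| := abs_mul _ _
          _ ≤ |s| * B := mul_le_mul_of_nonneg_left (hB x) (abs_nonneg s)
    have hdual := entropy_dual μ u (fun x => Real.exp (s * f x))
      (fun x => Real.exp_pos _) (hei s) hvlog_int huv_int hMint (hφpos s) hMpos
    -- identify the entropy term
    have e3 : ∫ x, Real.exp (s * f x) * Real.log (Real.exp (s * f x)) ∂μ = s * ψ s := by
      rw [hψdef, ← integral_const_mul]
      exact integral_congr_ae (ae_of_all _ fun x => by simp only [Real.log_exp]; ring)
    rw [e3] at hdual
    -- hdual : ∫ u * exp(s f) ≤ (s ψ s - φ s * F s) + φ s * log M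
    have hX2u : ∫ x, X x ^ 2 * Real.exp (s * f x) ∂μ
        = 8 * K ^ 2 * ∫ x, u x * Real.exp (s * f x) ∂μ := by
      rw [← integral_const_mul]
      apply integral_congr_ae (ae_of_all _ fun x => ?_)
      rw [hudef]
      field_simp
    -- put everything together
    rw [e1, e2] at h1
    set E : ℝ := s * ψ s - φ s * Real.log (φ s) with hEdef
    set P : ℝ := φ s with hPdef
    set L : ℝ := Real.log M with hLdef
    set θ : ℝ := 8 * ρ * s ^ 2 * K ^ 2 with hθdef
    have hPpos : 0 < P := hφpos s
    have hθnn : 0 ≤ θ := by positivity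
    have hLnn : 0 ≤ L := hlogM
    have hθhalf : θ ≤ 1 / 2 := by
      have := coef16 ρ K s b hρ hK hbpos hb2 hs.le hs4
      rw [hθdef]
      linarith
    -- the integral chain
    have hdual' : ∫ x, u x * Real.exp (s * f x) ∂μ ≤ E + P * L := by
      calc ∫ x, u x * Real.exp (s * f x) ∂μ ≤ (s * ψ s - P * Real.log P) + P * L := hdual
        _ = E + P * L := by rw [hEdef]
    have tchain : ∫ x, GF x ^ 2 * Real.exp (s * f x) ∂μ
        ≤ 2 * c ^ 2 * P + 2 * (8 * K ^ 2) * (E + P * L) := by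
      calc ∫ x, GF x ^ 2 * Real.exp (s * f x) ∂μ
          ≤ ∫ x, g x ^ 2 * Real.exp (s * f x) ∂μ := stepA
        _ ≤ 2 * c ^ 2 * P + 2 * ∫ x, X x ^ 2 * Real.exp (s * f x) ∂μ := stepB
        _ = 2 * c ^ 2 * P + 2 * (8 * K ^ 2) * ∫ x, u x * Real.exp (s * f x) ∂μ := by
            rw [hX2u]; ring
        _ ≤ 2 * c ^ 2 * P + 2 * (8 * K ^ 2) * (E + P * L) := by
            have h8 : (0:ℝ) ≤ 2 * (8 * K ^ 2) := by positivity
            nlinarith [mul_le_mul_of_nonneg_left hdual' h8]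
    have hmulpos : (0:ℝ) ≤ ρ / 2 * s ^ 2 := by positivity
    have hEntA : E ≤ ρ / 2 * s ^ 2 * (2 * c ^ 2 * P + 2 * (8 * K ^ 2) * (E + P * L)) := by
      have h2 := mul_le_mul_of_nonneg_left tchain hmulpos
      calc E ≤ ρ / 2 * (s ^ 2 * ∫ x, GF x ^ 2 * Real.exp (s * f x) ∂μ) := h1
        _ = ρ / 2 * s ^ 2 * ∫ x, GF x ^ 2 * Real.exp (s * f x) ∂μ := by ring
        _ ≤ _ := h2
    have hexpand : ρ / 2 * s ^ 2 * (2 * c ^ 2 * P + 2 * (8 * K ^ 2) * (E + P * L))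
        = ρ * s ^ 2 * c ^ 2 * P + θ * E + θ * (P * L) := by
      rw [hθdef]; ring
    rw [hexpand] at hEntA
    have hgoal_eq : κ * s ^ 2 * P = 2 * (ρ * s ^ 2 * c ^ 2 * P) + 2 * (θ * (P * L)) := by
      rw [hκdef, hθdef, hLdef]; ring
    have hterm1 : 0 ≤ ρ * s ^ 2 * c ^ 2 * P := by positivity
    have hterm2 : 0 ≤ θ * (P * L) := mul_nonneg hθnn (mul_nonneg hPpos.le hLnn)
    rw [hgoal_eq]
    exact selfBound E P L θ (ρ * s ^ 2 * c ^ 2) hPpos hθnn hLnn hθhalf (by positivity) hEntA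
  -- Herbst argument
  have herbst : ∀ Λ : ℝ, 0 < Λ → Λ ≤ (4 * b)⁻¹ →
      Real.log (φ Λ) ≤ Λ * (∫ x, f x ∂μ) + κ * Λ ^ 2 := by
    intro Λ hΛ hΛ4
    -- monotone comparison on [a, Λ]
    have slopeb : ∀ a : ℝ, 0 < a → a ≤ Λ →
        F Λ / Λ ≤ F a / a + (κ * Λ - κ * a) := by
      intro a ha haΛ
      have hWd : ∀ s : ℝ, s ≠ 0 → HasDerivAt (fun r => κ * r - F r / r)
          (κ * 1 - (ψ s / φ s * s - F s * 1) / s ^ 2) s := by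
        intro s hs0
        exact ((hasDerivAt_id s).const_mul κ).sub ((hFd s).div (hasDerivAt_id s) hs0)
      have hmono : MonotoneOn (fun r => κ * r - F r / r) (Icc a Λ) := by
        apply monotoneOn_of_deriv_nonneg (convex_Icc a Λ)
        · intro r hr
          have hr0 : r ≠ 0 := by
            have := hr.1
            intro h
            rw [h] at this
            linarith
          exact ((hWd r hr0).continuousAt).continuousWithinAt
        · intro r hr
          rw [interior_Icc] at hr
          have hr0 : r ≠ 0 := by intro h; rw [h] at hr; exact absurd hr.1 (by linarith)
          exact ((hWd r hr0).differentiableAt).differentiableWithinAt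
        · intro r hr
          rw [interior_Icc] at hr
          have hrpos : 0 < r := lt_trans ha hr.1
          have hd := hWd r hrpos.ne'
          rw [hd.deriv]
          have hE := entStep r hrpos (le_trans hr.2.le hΛ4)
          have hP := hφpos r
          have h2 : (ψ r / φ r * r - F r * 1) / r ^ 2 ≤ κ := by
            rw [div_le_iff₀ (by positivity : (0:ℝ) < r ^ 2)]
            have e : ψ r / φ r * r - F r * 1 = (r * ψ r - φ r * F r) / φ r := by
              field_simp
            rw [e, div_le_iff₀ hP]
            have eF : F r = Real.log (φ r) := rfl
            calc r * ψ r - φ r * F r ≤ κ * r ^ 2 * φ r := by rw [eF]; exact hE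
              _ = κ * r ^ 2 * φ r := rfl
          linarith
      have hmem1 : a ∈ Icc a Λ := ⟨le_refl a, haΛ⟩
      have hmem2 : Λ ∈ Icc a Λ := ⟨haΛ, le_refl Λ⟩
      have := hmono hmem1 hmem2 haΛ
      simp only at this
      linarith
    -- the limit a → 0⁺
    have hslope : Tendsto (fun a => F a / a) (𝓝[>] (0:ℝ)) (𝓝 (∫ x, f x ∂μ)) := by
      have h0 : HasDerivAt F (ψ 0 / φ 0) 0 := hFd 0
      have he : ψ 0 / φ 0 = ∫ x, f x ∂μ := by rw [hψ0, hφ0]; simp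
      rw [he] at h0
      have h1 := hasDerivAt_iff_tendsto_slope.mp h0
      have h2 : (𝓝[>] (0:ℝ)) ≤ (𝓝[≠] (0:ℝ)) := by
        apply nhdsWithin_mono
        intro x hx
        simp only [Set.mem_compl_iff, Set.mem_singleton_iff]
        exact ne_of_gt hx
      have h3 := h1.mono_left h2
      apply h3.congr'
      filter_upwards [self_mem_nhdsWithin] with a ha
      have ha0 : a ≠ 0 := ne_of_gt ha
      simp [slope, hF0, ha0, div_eq_inv_mul]
    have hlim : Tendsto (fun a => F a / a + (κ * Λ - κ * a)) (𝓝[>] (0:ℝ))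
        (𝓝 ((∫ x, f x ∂μ) + (κ * Λ - κ * 0))) := by
      apply hslope.add
      apply Tendsto.mono_left _ nhdsWithin_le_nhds
      exact (tendsto_const_nhds.sub ((continuous_const.mul continuous_id).tendsto 0))
    have hFΛ : F Λ / Λ ≤ (∫ x, f x ∂μ) + (κ * Λ - κ * 0) := by
      apply ge_of_tendsto hlim
      filter_upwards [Ioo_mem_nhdsGT_of_mem (Set.left_mem_Ico.mpr hΛ)] with a ha
      exact slopeb a ha.1 ha.2.le
    have : F Λ ≤ ((∫ x, f x ∂μ) + κ * Λ) * Λ := by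
      rw [mul_zero, sub_zero] at hFΛ
      exact (div_le_iff₀ hΛ).mp hFΛ
    calc Real.log (φ Λ) = F Λ := rfl
      _ ≤ ((∫ x, f x ∂μ) + κ * Λ) * Λ := this
      _ = Λ * (∫ x, f x ∂μ) + κ * Λ ^ 2 := by ring
  -- Chernoff bound
  have claim : ∀ t : ℝ, 0 ≤ t → ∀ lam : ℝ, 0 ≤ lam → lam ≤ (4 * b)⁻¹ →
      (μ {x | t ≤ f x - ∫ y, f y ∂μ}).toReal
        ≤ (1 + C / 3) * Real.exp (2 * ρ * c ^ 2 * lam ^ 2 - lam * t) := by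
    intro t ht lam hlam hlam4
    have hPle1 : (μ {x | t ≤ f x - ∫ y, f y ∂μ}).toReal ≤ 1 := by
      rw [← ENNReal.toReal_one]
      exact ENNReal.toReal_mono ENNReal.one_ne_top prob_le_one
    rcases hlam.eq_or_lt with h0 | hlampos
    · rw [← h0]
      have he0 : (2 : ℝ) * ρ * c ^ 2 * 0 ^ 2 - 0 * t = 0 := by ring
      rw [he0, Real.exp_zero, mul_one]
      calc (μ {x | t ≤ f x - ∫ y, f y ∂μ}).toReal ≤ 1 := hPle1
        _ ≤ 1 + C / 3 := by linarith
    · have hch := ProbabilityTheory.measure_ge_le_exp_mul_mgf (μ := μ) (X := f)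
        (t + ∫ x, f x ∂μ) hlampos.le (hei lam)
      have hmgf : ProbabilityTheory.mgf f μ lam = φ lam := rfl
      have hset : {ω | t + (∫ x, f x ∂μ) ≤ f ω} = {x | t ≤ f x - ∫ y, f y ∂μ} := by
        ext x
        simp only [Set.mem_setOf_eq]
        constructor <;> intro h <;> linarith
      rw [hmgf, hset] at hch
      have hφle : φ lam ≤ Real.exp (lam * (∫ x, f x ∂μ) + κ * lam ^ 2) := by
        have h1 := herbst lam hlampos hlam4
        have h2 : φ lam = Real.exp (Real.log (φ lam)) := (Real.exp_log (hφpos lam)).symm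
        rw [h2]
        exact Real.exp_le_exp.mpr h1
      have hstep : Real.exp (-lam * (t + ∫ x, f x ∂μ)) * φ lam
          ≤ Real.exp (κ * lam ^ 2 - lam * t) := by
        calc Real.exp (-lam * (t + ∫ x, f x ∂μ)) * φ lam
            ≤ Real.exp (-lam * (t + ∫ x, f x ∂μ))
              * Real.exp (lam * (∫ x, f x ∂μ) + κ * lam ^ 2) :=
              mul_le_mul_of_nonneg_left hφle (Real.exp_pos _).le
          _ = Real.exp (κ * lam ^ 2 - lam * t) := by
              rw [← Real.exp_add]
              congr 1
              ring
      have hsplit : Real.exp (κ * lam ^ 2 - lam * t)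
          ≤ M * Real.exp (2 * ρ * c ^ 2 * lam ^ 2 - lam * t) := by
        have hκlam : κ * lam ^ 2 - lam * t
            = (16 * ρ * K ^ 2 * lam ^ 2) * Real.log M + (2 * ρ * c ^ 2 * lam ^ 2 - lam * t) := by
          rw [hκdef]; ring
        rw [hκlam, Real.exp_add]
        apply mul_le_mul_of_nonneg_right _ (Real.exp_pos _).le
        have hcoef : 16 * ρ * K ^ 2 * lam ^ 2 ≤ 1 :=
          coef16 ρ K lam b hρ hK hbpos hb2 hlam hlam4
        calc Real.exp (16 * ρ * K ^ 2 * lam ^ 2 * Real.log M)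
            ≤ Real.exp (Real.log M) := by
              apply Real.exp_le_exp.mpr
              calc 16 * ρ * K ^ 2 * lam ^ 2 * Real.log M ≤ 1 * Real.log M :=
                    mul_le_mul_of_nonneg_right hcoef hlogM
                _ = Real.log M := one_mul _
          _ = M := Real.exp_log hMpos
      calc (μ {x | t ≤ f x - ∫ y, f y ∂μ}).toReal
          ≤ Real.exp (-lam * (t + ∫ x, f x ∂μ)) * φ lam := hch
        _ ≤ Real.exp (κ * lam ^ 2 - lam * t) := hstep
        _ ≤ M * Real.exp (2 * ρ * c ^ 2 * lam ^ 2 - lam * t) := hsplit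
        _ ≤ (1 + C / 3) * Real.exp (2 * ρ * c ^ 2 * lam ^ 2 - lam * t) :=
            mul_le_mul_of_nonneg_right hMle (Real.exp_pos _).le
  -- final optimization over lam
  intro t ht
  have hdenpos : 0 < 8 * (ρ * c ^ 2 + b * t) := by
    have : 0 ≤ b * t := mul_nonneg hbpos.le ht
    positivity
  have hfinal_const : 1 + C / 3 ≤ 4 * C / 3 := by linarith
  rcases le_or_gt (t / (4 * ρ * c ^ 2)) ((4 * b)⁻¹) with hcase | hcase
  · -- small t: Gaussian regime
    set lam : ℝ := t / (4 * ρ * c ^ 2) with hlamdef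
    have hlamnn : 0 ≤ lam := by positivity
    have h1 := claim t ht lam hlamnn hcase
    have harg : 2 * ρ * c ^ 2 * lam ^ 2 - lam * t = -t ^ 2 / (8 * (ρ * c ^ 2)) := by
      rw [hlamdef]
      field_simp
      ring
    have harg2 : -t ^ 2 / (8 * (ρ * c ^ 2)) ≤ -t ^ 2 / (8 * (ρ * c ^ 2 + b * t)) := by
      rw [neg_div, neg_div, neg_le_neg_iff]
      apply div_le_div_of_nonneg_left (by positivity) (by positivity)
      nlinarith [mul_nonneg hbpos.le ht]
    calc (μ {x | t ≤ f x - ∫ y, f y ∂μ}).toReal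
        ≤ (1 + C / 3) * Real.exp (2 * ρ * c ^ 2 * lam ^ 2 - lam * t) := h1
      _ ≤ 4 * C / 3 * Real.exp (-t ^ 2 / (8 * (ρ * c ^ 2 + b * t))) := by
          apply mul_le_mul hfinal_const _ (Real.exp_pos _).le (by positivity)
          rw [harg]
          exact Real.exp_le_exp.mpr harg2
  · -- large t: exponential regime
    have h1 := claim t ht ((4 * b)⁻¹) (by positivity) le_rfl
    have hbt : ρ * c ^ 2 < b * t := by
      rw [lt_div_iff₀ (show (0:ℝ) < 4 * ρ * c ^ 2 by positivity)] at hcase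
      have h2 := mul_lt_mul_of_pos_left hcase hbpos
      have e : b * ((4 * b)⁻¹ * (4 * ρ * c ^ 2)) = ρ * c ^ 2 := by
        field_simp
      rw [e] at h2
      linarith
    have harg : 2 * ρ * c ^ 2 * ((4 * b)⁻¹) ^ 2 - (4 * b)⁻¹ * t
        ≤ -t ^ 2 / (8 * (ρ * c ^ 2 + b * t)) := by
      have e1 : 2 * ρ * c ^ 2 * ((4 * b)⁻¹) ^ 2 - (4 * b)⁻¹ * t
          = ρ * c ^ 2 / (8 * b ^ 2) - t / (4 * b) := by
        field_simp
        ring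
      have key : t ^ 2 / (8 * (ρ * c ^ 2 + b * t)) ≤ t / (4 * b) - ρ * c ^ 2 / (8 * b ^ 2) := by
        rw [div_le_iff₀ hdenpos]
        have expand : (t / (4 * b) - ρ * c ^ 2 / (8 * b ^ 2)) * (8 * (ρ * c ^ 2 + b * t))
            = ((2 * b * t - ρ * c ^ 2) * (ρ * c ^ 2 + b * t)) / b ^ 2 := by
          field_simp
          ring
        rw [expand, le_div_iff₀ (by positivity : (0:ℝ) < b ^ 2)]
        have hw : (0:ℝ) < ρ * c ^ 2 := by positivity
        have e2 : t ^ 2 * b ^ 2 = (b * t) ^ 2 := by ring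
        rw [e2, show 2 * b * t = 2 * (b * t) by ring]
        exact quad_ineq (b * t) (ρ * c ^ 2) hw hbt
      have hnd : -t ^ 2 / (8 * (ρ * c ^ 2 + b * t)) = -(t ^ 2 / (8 * (ρ * c ^ 2 + b * t))) := by
        ring
      rw [e1, hnd]
      linarith
    calc (μ {x | t ≤ f x - ∫ y, f y ∂μ}).toReal
        ≤ (1 + C / 3) * Real.exp (2 * ρ * c ^ 2 * ((4 * b)⁻¹) ^ 2 - (4 * b)⁻¹ * t) := h1
      _ ≤ 4 * C / 3 * Real.exp (-t ^ 2 / (8 * (ρ * c ^ 2 + b * t))) := by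
          apply mul_le_mul hfinal_const _ (Real.exp_pos _).le (by positivity)
          exact Real.exp_le_exp.mpr harg

set_option maxHeartbeats 1000000 in
/-- **Bernstein-type inequality under a modified log-Sobolev inequality**
(Sambale–Sinulis, Corollary). -/
theorem bernstein_type_mLSI
    {Ω : Type*} [MeasurableSpace Ω] (μ : Measure Ω) [IsProbabilityMeasure μ]
    (𝒜 : Set (Ω → ℝ)) (Γ : (Ω → ℝ) → Ω → ℝ) (ρ : ℝ) (hρ : 0 < ρ)
    -- 𝒜 is a class of bounded measurable functions
    (h𝒜_bdd : ∀ h ∈ 𝒜, ∃ B : ℝ, ∀ x, |h x| ≤ B)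
    (h𝒜_meas : ∀ h ∈ 𝒜, Measurable h)
    -- Γ is a difference operator on 𝒜
    (hΓ_nonneg : ∀ h ∈ 𝒜, ∀ x, 0 ≤ Γ h x)
    (hΓ_meas : ∀ h ∈ 𝒜, Measurable (Γ h))
    (hΓ_aff : ∀ h ∈ 𝒜, ∀ a b : ℝ, 0 ≤ a →
      (fun x => a * h x + b) ∈ 𝒜 ∧ Γ (fun x => a * h x + b) = fun x => a * Γ h x)
    -- μ satisfies a Γ-mLSI(ρ)
    (hmLSI : ∀ h ∈ 𝒜,
      (∫ x, h x * Real.exp (h x) ∂μ)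
          - (∫ x, Real.exp (h x) ∂μ) * Real.log (∫ x, Real.exp (h x) ∂μ)
        ≤ ρ / 2 * ∫ x, Γ h x ^ 2 * Real.exp (h x) ∂μ)
    -- the functions f and g
    (f g : Ω → ℝ) (hf : f ∈ 𝒜) (hg_meas : Measurable g)
    (hfg : ∀ x, Γ f x ≤ g x)
    -- g is sub-Gaussian
    (c C K : ℝ) (hc : 0 < c) (hC : 1 ≤ C) (hK : 0 < K)
    (hsub : ∀ t : ℝ, 0 ≤ t →
      (μ {x | c + t ≤ g x}).toReal ≤ C * Real.exp (-t ^ 2 / (2 * K ^ 2))) :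
    (∀ t : ℝ, 0 ≤ t →
      (μ {x | t ≤ f x - ∫ y, f y ∂μ}).toReal
        ≤ 4 * C / 3 *
            Real.exp (-t ^ 2 / (8 * (ρ * c ^ 2 + Real.sqrt ρ * K * t))))
    ∧ ((∀ a : ℝ, (fun x => a * f x) ∈ 𝒜 ∧
          Γ (fun x => a * f x) = fun x => |a| * Γ f x) →
        ∀ t : ℝ, 0 ≤ t →
          (μ {x | t ≤ (∫ y, f y ∂μ) - f x}).toReal
            ≤ 4 * C / 3 *
                Real.exp (-t ^ 2 / (8 * (ρ * c ^ 2 + Real.sqrt ρ * K * t)))) := by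
  obtain ⟨B, hB⟩ := h𝒜_bdd f hf
  have hfm : Measurable f := h𝒜_meas f hf
  have hB' : ∀ x, |f x| ≤ |B| := fun x => (hB x).trans (le_abs_self B)
  have hEntGen : ∀ h' : Ω → ℝ, h' ∈ 𝒜 → ∀ s : ℝ, 0 ≤ s →
      (∫ x, (s * h' x) * Real.exp (s * h' x) ∂μ)
          - (∫ x, Real.exp (s * h' x) ∂μ) * Real.log (∫ x, Real.exp (s * h' x) ∂μ)
        ≤ ρ / 2 * ∫ x, (s * Γ h' x) ^ 2 * Real.exp (s * h' x) ∂μ := by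
    intro h' hh s hs
    obtain ⟨hmem, hΓeq⟩ := hΓ_aff h' hh s 0 hs
    have hsimpl : (fun x : Ω => s * h' x + 0) = fun x => s * h' x := by
      funext x; ring
    rw [hsimpl] at hmem hΓeq
    have h := hmLSI _ hmem
    rw [hΓeq] at h
    simpa using h
  constructor
  · exact main_tail μ ρ hρ f g (Γ f) hfm |B| (abs_nonneg B) hB' (hΓ_meas f hf)
      (hΓ_nonneg f hf) hg_meas hfg c C K hc hC hK hsub (hEntGen f hf)
  · intro habs
    obtain ⟨hmem, hΓeq⟩ := habs (-1)
    have hΓeq' : Γ (fun x => -1 * f x) = fun x => Γ f x := by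
      rw [hΓeq]
      funext x
      simp
    have hres := main_tail μ ρ hρ (fun x => -1 * f x) g (Γ (fun x => -1 * f x))
      (hfm.const_mul (-1)) |B| (abs_nonneg B)
      (fun x => by simpa using hB' x)
      (hΓ_meas _ hmem) (hΓ_nonneg _ hmem) hg_meas
      (fun x => (congrFun hΓeq' x).trans_le (hfg x))
      c C K hc hC hK hsub (hEntGen _ hmem)
    intro t ht
    have hint : ∫ y, -1 * f y ∂μ = -1 * ∫ y, f y ∂μ := integral_const_mul _ _
    have hset : {x | t ≤ (∫ y, f y ∂μ) - f x}
        = {x | t ≤ -1 * f x - ∫ y, -1 * f y ∂μ} := by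
      ext x
      simp only [Set.mem_setOf_eq, hint]
      constructor <;> intro <;> linarith
    rw [hset]
    exact hres t ht
end

section
/- Let (Ω, 𝓕, μ) be a probability space and Γ a difference operator such that μ satisfies a Γ-mLSI(ρ) for some ρ > 0. Let f ≥ 0 be a function in the admissible class that is Γ-(a,b)-self-bounded, i.e. Γ(f)² ≤ a·f + b pointwise for constants a, b ≥ 0. Then for all t ≥ 0, μ(f − E_μ f ≥ t) ≤ exp(−t²/(2ρ·(2a·E_μ f + 2b + at/3))). If additionally Γ(λ·f) = |λ|·Γ(f) for all λ ∈ ℝ, then for all t ∈ [0, E_μ f], μ(E_μ f − f ≥ t) ≤ exp(−t²/(2ρ·(2a·E_μ f + 2b + at/3))). -/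
open MeasureTheory Real

section HerbstAux

open Filter

lemma herbst_int_exp {Ω : Type*} [MeasurableSpace Ω] {μ : Measure Ω}
    [IsProbabilityMeasure μ] {f : Ω → ℝ} (hmf : Measurable f) {B : ℝ}
    (hB : ∀ x, |f x| ≤ B) (s : ℝ) :
    Integrable (fun x => Real.exp (s * f x)) μ := by
  refine (integrable_const (Real.exp (|s| * B))).mono'
    ((hmf.const_mul s).exp.aestronglyMeasurable) (Filter.Eventually.of_forall fun x => ?_)
  rw [Real.norm_eq_abs, Real.abs_exp]
  refine Real.exp_le_exp.mpr ?_
  calc s * f x ≤ |s * f x| := le_abs_self _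
    _ = |s| * |f x| := abs_mul _ _
    _ ≤ |s| * B := mul_le_mul_of_nonneg_left (hB x) (abs_nonneg s)

lemma herbst_int_mul_exp {Ω : Type*} [MeasurableSpace Ω] {μ : Measure Ω}
    [IsProbabilityMeasure μ] {f g : Ω → ℝ} (hmf : Measurable f) (hmg : Measurable g)
    {B C : ℝ} (hB : ∀ x, |f x| ≤ B) (hC : ∀ x, |g x| ≤ C) (s : ℝ) :
    Integrable (fun x => g x * Real.exp (s * f x)) μ := by
  refine (integrable_const (C * Real.exp (|s| * B))).mono'
    (hmg.mul (hmf.const_mul s).exp).aestronglyMeasurable (Filter.Eventually.of_forall fun x => ?_)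
  rw [Real.norm_eq_abs, abs_mul, Real.abs_exp]
  have h1 : Real.exp (s * f x) ≤ Real.exp (|s| * B) := by
    refine Real.exp_le_exp.mpr ?_
    calc s * f x ≤ |s * f x| := le_abs_self _
      _ = |s| * |f x| := abs_mul _ _
      _ ≤ |s| * B := mul_le_mul_of_nonneg_left (hB x) (abs_nonneg s)
  exact mul_le_mul (hC x) h1 (Real.exp_pos _).le ((abs_nonneg _).trans (hC x))


lemma herbst_hasDerivAt {Ω : Type*} [MeasurableSpace Ω] (μ : Measure Ω)
    [IsProbabilityMeasure μ] {f : Ω → ℝ} (hmf : Measurable f) {B : ℝ} (hBnn : 0 ≤ B)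
    (hB : ∀ x, |f x| ≤ B) (s₀ : ℝ) :
    HasDerivAt (fun s => ∫ x, Real.exp (s * f x) ∂μ)
      (∫ x, f x * Real.exp (s₀ * f x) ∂μ) s₀ := by
  have hint : ∀ s : ℝ, Integrable (fun x => Real.exp (s * f x)) μ := by
    intro s
    refine (integrable_const (Real.exp (|s| * B))).mono'
      ((hmf.const_mul s).exp.aestronglyMeasurable) (Filter.Eventually.of_forall fun x => ?_)
    rw [Real.norm_eq_abs, Real.abs_exp]
    refine Real.exp_le_exp.mpr ?_
    calc s * f x ≤ |s * f x| := le_abs_self _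
      _ = |s| * |f x| := abs_mul _ _
      _ ≤ |s| * B := mul_le_mul_of_nonneg_left (hB x) (abs_nonneg s)
  have key := hasDerivAt_integral_of_dominated_loc_of_deriv_le (μ := μ)
    (F := fun s x => Real.exp (s * f x)) (F' := fun s x => f x * Real.exp (s * f x))
    (x₀ := s₀) (bound := fun _ => B * Real.exp ((|s₀| + 1) * B)) (s := Metric.ball s₀ 1) (Metric.ball_mem_nhds s₀ one_pos)
    (Filter.Eventually.of_forall fun s => ((hmf.const_mul s).exp).aestronglyMeasurable)
    (hint s₀)
    ((hmf.mul (hmf.const_mul s₀).exp).aestronglyMeasurable)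
    (Filter.Eventually.of_forall fun x => ?_)
    (integrable_const _)
    (Filter.Eventually.of_forall fun x => ?_)
  · exact key.2
  · intro s hs
    rw [Real.norm_eq_abs, abs_mul, Real.abs_exp]
    have habs : |s| ≤ |s₀| + 1 := by
      have : |s - s₀| < 1 := by simpa [Real.dist_eq] using Metric.mem_ball.mp hs
      calc |s| = |s₀ + (s - s₀)| := by ring_nf
        _ ≤ |s₀| + |s - s₀| := abs_add_le _ _
        _ ≤ |s₀| + 1 := by linarith
    have h1 : Real.exp (s * f x) ≤ Real.exp ((|s₀| + 1) * B) := by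
      refine Real.exp_le_exp.mpr ?_
      calc s * f x ≤ |s * f x| := le_abs_self _
        _ = |s| * |f x| := abs_mul _ _
        _ ≤ (|s₀| + 1) * B := mul_le_mul habs (hB x) (abs_nonneg _) (by positivity)
    exact mul_le_mul (hB x) h1 (Real.exp_pos _).le ((abs_nonneg _).trans (hB x))
  · intro s _
    have h := ((hasDerivAt_mul_const (f x)).exp (x := s))
    exact h.congr_deriv (mul_comm _ _)

lemma herbst_jensen {Ω : Type*} [MeasurableSpace Ω] (μ : Measure Ω)
    [IsProbabilityMeasure μ] {f : Ω → ℝ} (hintf : Integrable f μ)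
    {s : ℝ} (hint : Integrable (fun x => Real.exp (s * f x)) μ) :
    s * (∫ x, f x ∂μ) ≤ Real.log (∫ x, Real.exp (s * f x) ∂μ) := by
  set m := ∫ x, f x ∂μ with hm
  rw [Real.le_log_iff_exp_le (integral_exp_pos hint)]
  have hpt : ∀ x, Real.exp (s * m) * (1 + (s * f x - s * m)) ≤ Real.exp (s * f x) := by
    intro x
    have h := Real.add_one_le_exp (s * f x - s * m)
    have h2 := mul_le_mul_of_nonneg_left h (Real.exp_pos (s * m)).le
    calc Real.exp (s * m) * (1 + (s * f x - s * m))
        = Real.exp (s * m) * (s * f x - s * m + 1) := by ring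
      _ ≤ Real.exp (s * m) * Real.exp (s * f x - s * m) := h2
      _ = Real.exp (s * f x) := by rw [← Real.exp_add]; ring_nf
  have hsub : Integrable (fun x => s * f x - s * m) μ :=
    (hintf.const_mul s).sub (integrable_const _)
  have hadd : Integrable (fun x => 1 + (s * f x - s * m)) μ :=
    (integrable_const 1).add hsub
  have hintl : Integrable (fun x => Real.exp (s * m) * (1 + (s * f x - s * m))) μ :=
    hadd.const_mul _
  calc Real.exp (s * m) = ∫ x, Real.exp (s * m) * (1 + (s * f x - s * m)) ∂μ := by
        rw [integral_const_mul, integral_add (integrable_const 1) hsub,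
          integral_sub (hintf.const_mul s) (integrable_const (s * m)),
          integral_const_mul, integral_const, integral_const]
        simp [measure_univ, ← hm]
    _ ≤ ∫ x, Real.exp (s * f x) ∂μ := integral_mono hintl hint hpt

lemma herbst_key {Ω : Type*} [MeasurableSpace Ω] (μ : Measure Ω)
    [IsProbabilityMeasure μ] {f : Ω → ℝ} (hmf : Measurable f) {B : ℝ} (hBnn : 0 ≤ B)
    (hB : ∀ x, |f x| ≤ B) (α β lam : ℝ) (hlam : 0 < lam)
    (hint : ∀ s : ℝ, Integrable (fun x => Real.exp (s * f x)) μ)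
    (hDI : ∀ s, 0 < s → s ≤ lam →
      s * (∫ x, f x * Real.exp (s * f x) ∂μ)
        - (∫ x, Real.exp (s * f x) ∂μ) * Real.log (∫ x, Real.exp (s * f x) ∂μ)
      ≤ s ^ 2 * (α * (∫ x, f x * Real.exp (s * f x) ∂μ)
          + β * (∫ x, Real.exp (s * f x) ∂μ))) :
    Real.log (∫ x, Real.exp (lam * f x) ∂μ)
      ≤ lam * (∫ x, f x ∂μ)
        + (α * Real.log (∫ x, Real.exp (lam * f x) ∂μ) + β * lam) * lam := by
  set L : ℝ → ℝ := fun s => ∫ x, Real.exp (s * f x) ∂μ with hL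
  set D : ℝ → ℝ := fun s => ∫ x, f x * Real.exp (s * f x) ∂μ with hD
  have hLpos : ∀ s, 0 < L s := fun s => integral_exp_pos (hint s)
  have hLd : ∀ s, HasDerivAt L (D s) s := herbst_hasDerivAt μ hmf hBnn hB
  set K : ℝ → ℝ := fun s => Real.log (L s) with hK
  have hKd : ∀ s, HasDerivAt K (D s / L s) s := fun s => (hLd s).log (hLpos s).ne'
  -- F
  set F : ℝ → ℝ := fun s => K s / s - (α * K s + β * s) with hF
  have hFd : ∀ s : ℝ, s ≠ 0 → HasDerivAt F
      ((D s / L s * s - K s * 1) / s ^ 2 - (α * (D s / L s) + β * 1)) s := by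
    intro s hs
    exact ((hKd s).div (hasDerivAt_id s) hs).sub
      (((hKd s).const_mul α).add ((hasDerivAt_id s).const_mul β))
  -- derivative nonpositive on (0, lam]
  have hF'le : ∀ s, 0 < s → s ≤ lam →
      (D s / L s * s - K s * 1) / s ^ 2 - (α * (D s / L s) + β * 1) ≤ 0 := by
    intro s hs hsl
    have hI := hDI s hs hsl
    have hl := hLpos s
    have hs2 : (0:ℝ) < s ^ 2 := by positivity
    set u := D s / L s with hu
    have hk' : u * L s = D s := div_mul_cancel₀ _ hl.ne'
    have h2 : L s * (u * s - K s) ≤ L s * ((α * u + β) * s ^ 2) := by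
      have e1 : L s * (u * s - K s) = s * D s - L s * K s := by
        rw [← hk']; ring
      have e2 : L s * ((α * u + β) * s ^ 2) = s ^ 2 * (α * D s + β * L s) := by
        rw [← hk']; ring
      rw [e1, e2]; exact hI
    have h3 : u * s - K s ≤ (α * u + β) * s ^ 2 := le_of_mul_le_mul_left h2 hl
    rw [sub_nonpos, div_le_iff₀ hs2]
    nlinarith [h3]
  -- antitone on Ioc 0 lam
  have hanti : AntitoneOn F (Set.Ioc 0 lam) := by
    apply antitoneOn_of_deriv_nonpos (convex_Ioc 0 lam)
    · intro s hs
      exact ((hFd s (ne_of_gt hs.1)).continuousAt).continuousWithinAt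
    · intro s hs
      rw [interior_Ioc] at hs
      exact ((hFd s (ne_of_gt hs.1)).differentiableAt).differentiableWithinAt
    · intro s hs
      rw [interior_Ioc] at hs
      rw [(hFd s (ne_of_gt hs.1)).deriv]
      exact hF'le s hs.1 hs.2.le
  -- limit of F at 0+
  have hK0 : K 0 = 0 := by
    have : L 0 = 1 := by
      simp [hL, Real.exp_zero, measure_univ]
    simp [hK, this]
  have htend : Tendsto F (nhdsWithin 0 (Set.Ioi 0)) (nhds (D 0 / L 0)) := by
    have h1 : Tendsto (fun s => K s / s) (nhdsWithin 0 (Set.Ioi 0)) (nhds (D 0 / L 0)) := by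
      have := hasDerivAt_iff_tendsto_slope.mp (hKd 0)
      have h2 : Tendsto (slope K 0) (nhdsWithin 0 (Set.Ioi 0)) (nhds (D 0 / L 0)) :=
        this.mono_left (nhdsWithin_mono 0 (fun x hx => ne_of_gt hx))
      refine h2.congr fun s => ?_
      simp [slope, hK0, div_eq_inv_mul]
    have h2 : Tendsto (fun s => α * K s + β * s) (nhdsWithin 0 (Set.Ioi 0)) (nhds 0) := by
      have hKc : ContinuousAt K 0 := (hKd 0).continuousAt
      have : Tendsto (fun s => α * K s + β * s) (nhds 0) (nhds (α * K 0 + β * 0)) := by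
        exact ((hKc.const_mul α).add (continuousAt_id.const_mul β))
      rw [hK0] at this
      simpa using this.mono_left nhdsWithin_le_nhds
    simpa using h1.sub h2
  -- conclude F lam ≤ D 0 / L 0
  have hFlam : F lam ≤ D 0 / L 0 := by
    refine ge_of_tendsto htend ?_
    filter_upwards [Ioc_mem_nhdsGT_of_mem ⟨le_refl (0:ℝ), hlam⟩] with s hs
    exact hanti hs ⟨hlam, le_refl lam⟩ hs.2
  have hD0 : D 0 = ∫ x, f x ∂μ := by
    simp [hD]
  have hL0 : L 0 = 1 := by simp [hL, Real.exp_zero, measure_univ]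
  rw [hD0, hL0, div_one] at hFlam
  have : K lam / lam - (α * K lam + β * lam) ≤ ∫ x, f x ∂μ := hFlam
  have hKlam : K lam ≤ lam * (∫ x, f x ∂μ) + (α * K lam + β * lam) * lam := by
    have h := mul_le_mul_of_nonneg_right this hlam.le
    rw [sub_mul, div_mul_cancel₀ _ hlam.ne'] at h
    linarith [h]
  exact hKlam

end HerbstAux

/-- **Deviation inequalities for self-bounded functions under an mLSI**
(Sambale–Sinulis, Proposition on self-bounded functions). -/
theorem self_bounded_mLSI
    {Ω : Type*} [MeasurableSpace Ω] (μ : Measure Ω) [IsProbabilityMeasure μ]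
    (𝒜 : Set (Ω → ℝ)) (Γ : (Ω → ℝ) → Ω → ℝ) (ρ : ℝ) (hρ : 0 < ρ)
    -- 𝒜 is a class of bounded measurable functions
    (h𝒜_bdd : ∀ h ∈ 𝒜, ∃ B : ℝ, ∀ x, |h x| ≤ B)
    (h𝒜_meas : ∀ h ∈ 𝒜, Measurable h)
    -- Γ is a difference operator on 𝒜
    (hΓ_nonneg : ∀ h ∈ 𝒜, ∀ x, 0 ≤ Γ h x)
    (hΓ_meas : ∀ h ∈ 𝒜, Measurable (Γ h))
    (hΓ_aff : ∀ h ∈ 𝒜, ∀ a b : ℝ, 0 ≤ a →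
      (fun x => a * h x + b) ∈ 𝒜 ∧ Γ (fun x => a * h x + b) = fun x => a * Γ h x)
    -- μ satisfies a Γ-mLSI(ρ)
    (hmLSI : ∀ h ∈ 𝒜,
      (∫ x, h x * Real.exp (h x) ∂μ)
          - (∫ x, Real.exp (h x) ∂μ) * Real.log (∫ x, Real.exp (h x) ∂μ)
        ≤ ρ / 2 * ∫ x, Γ h x ^ 2 * Real.exp (h x) ∂μ)
    -- f is a nonnegative Γ-(a,b)-self-bounded function
    (f : Ω → ℝ) (hf : f ∈ 𝒜) (hf_nonneg : ∀ x, 0 ≤ f x)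
    (a b : ℝ) (ha : 0 ≤ a) (hb : 0 ≤ b)
    (hsb : ∀ x, Γ f x ^ 2 ≤ a * f x + b) :
    (∀ t : ℝ, 0 ≤ t →
      (μ {x | t ≤ f x - ∫ y, f y ∂μ}).toReal
        ≤ Real.exp (-t ^ 2 /
            (2 * ρ * (2 * a * (∫ y, f y ∂μ) + 2 * b + a * t / 3))))
    ∧ ((∀ lam : ℝ, (fun x => lam * f x) ∈ 𝒜 ∧
          Γ (fun x => lam * f x) = fun x => |lam| * Γ f x) →
        ∀ t : ℝ, 0 ≤ t → t ≤ ∫ y, f y ∂μ →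
          (μ {x | t ≤ (∫ y, f y ∂μ) - f x}).toReal
            ≤ Real.exp (-t ^ 2 /
                (2 * ρ * (2 * a * (∫ y, f y ∂μ) + 2 * b + a * t / 3)))) := by
  classical
  obtain ⟨B₀, hB₀⟩ := h𝒜_bdd f hf
  have hmf : Measurable f := h𝒜_meas f hf
  set B : ℝ := max B₀ 0 with hBdef
  have hB : ∀ x, |f x| ≤ B := fun x => le_trans (hB₀ x) (le_max_left _ _)
  have hBnn : 0 ≤ B := le_max_right _ _
  have hΓmf : Measurable (Γ f) := hΓ_meas f hf
  set m : ℝ := ∫ y, f y ∂μ with hm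
  have hm0 : 0 ≤ m := integral_nonneg hf_nonneg
  have hintf : Integrable f μ := (integrable_const B).mono' hmf.aestronglyMeasurable
    (Filter.Eventually.of_forall fun x => by rw [Real.norm_eq_abs]; exact hB x)
  have hint : ∀ s : ℝ, Integrable (fun x => Real.exp (s * f x)) μ :=
    fun s => herbst_int_exp hmf hB s
  have hintD : ∀ s : ℝ, Integrable (fun x => f x * Real.exp (s * f x)) μ :=
    fun s => herbst_int_mul_exp hmf hmf hB hB s
  have htriv : ∀ S : Set Ω, (μ S).toReal ≤ 1 := fun S => by
    simpa using ENNReal.toReal_mono (measure_ne_top μ Set.univ)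
      (measure_mono (Set.subset_univ S))
  -- the differential inequality coming from the mLSI
  have hDIgen : ∀ (s : ℝ) (g : Ω → ℝ), g ∈ 𝒜 → (∀ x, g x = s * f x) →
      (∀ x, Γ g x ^ 2 = s ^ 2 * Γ f x ^ 2) →
      s * (∫ x, f x * Real.exp (s * f x) ∂μ)
        - (∫ x, Real.exp (s * f x) ∂μ) * Real.log (∫ x, Real.exp (s * f x) ∂μ)
      ≤ ρ / 2 * (s ^ 2 * (a * (∫ x, f x * Real.exp (s * f x) ∂μ)
          + b * (∫ x, Real.exp (s * f x) ∂μ))) := by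
    intro s g hg𝒜 hgx hgsq
    have h := hmLSI g hg𝒜
    have h1 : (∫ x, g x * Real.exp (g x) ∂μ)
        = s * ∫ x, f x * Real.exp (s * f x) ∂μ := by
      rw [← integral_const_mul]
      congr 1; funext x; rw [hgx x]; ring
    have h2 : (∫ x, Real.exp (g x) ∂μ) = ∫ x, Real.exp (s * f x) ∂μ := by
      congr 1; funext x; rw [hgx x]
    have h3 : (∫ x, Γ g x ^ 2 * Real.exp (g x) ∂μ)
        = s ^ 2 * ∫ x, Γ f x ^ 2 * Real.exp (s * f x) ∂μ := by
      rw [← integral_const_mul]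
      congr 1; funext x; rw [hgx x, hgsq x]; ring
    rw [h1, h2, h3] at h
    have hintb : Integrable (fun x => Γ f x ^ 2 * Real.exp (s * f x)) μ := by
      refine herbst_int_mul_exp hmf (hΓmf.pow_const 2) hB (C := a * B + b) (fun x => ?_) s
      rw [abs_of_nonneg (sq_nonneg _)]
      refine (hsb x).trans ?_
      have h4 := (abs_le.mp (hB x)).2
      have := mul_le_mul_of_nonneg_left h4 ha
      linarith
    have hmono : (∫ x, Γ f x ^ 2 * Real.exp (s * f x) ∂μ)
        ≤ a * (∫ x, f x * Real.exp (s * f x) ∂μ) + b * (∫ x, Real.exp (s * f x) ∂μ) := by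
      have e : a * (∫ x, f x * Real.exp (s * f x) ∂μ) + b * (∫ x, Real.exp (s * f x) ∂μ)
          = ∫ x, (a * (f x * Real.exp (s * f x)) + b * Real.exp (s * f x)) ∂μ := by
        rw [integral_add ((hintD s).const_mul a) ((hint s).const_mul b),
          integral_const_mul, integral_const_mul]
      rw [e]
      refine integral_mono hintb
        (((hintD s).const_mul a).add ((hint s).const_mul b)) fun x => ?_
      have := mul_le_mul_of_nonneg_right (hsb x) (Real.exp_pos (s * f x)).le
      calc Γ f x ^ 2 * Real.exp (s * f x) ≤ (a * f x + b) * Real.exp (s * f x) := this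
        _ = a * (f x * Real.exp (s * f x)) + b * Real.exp (s * f x) := by ring
    refine h.trans ?_
    have h5 : s ^ 2 * (∫ x, Γ f x ^ 2 * Real.exp (s * f x) ∂μ)
        ≤ s ^ 2 * (a * (∫ x, f x * Real.exp (s * f x) ∂μ)
            + b * (∫ x, Real.exp (s * f x) ∂μ)) :=
      mul_le_mul_of_nonneg_left hmono (sq_nonneg s)
    have hρ2 : (0:ℝ) ≤ ρ / 2 := by linarith
    exact mul_le_mul_of_nonneg_left h5 hρ2
  constructor
  · -- upper tail
    intro t ht
    rcases eq_or_lt_of_le ht with h0 | htpos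
    · rw [← h0]
      norm_num
      exact htriv _
    by_cases hv : 0 < a * m + b
    case neg =>
      have hv0 : a * m + b = 0 :=
        le_antisymm (not_lt.mp hv) (add_nonneg (mul_nonneg ha hm0) hb)
      have hb0 : b = 0 := by linarith [mul_nonneg ha hm0]
      have ham : a * m = 0 := by linarith
      by_cases ha0 : a = 0
      · rw [ha0, hb0]
        norm_num
        exact htriv _
      · have hm00 : m = 0 := by
          rcases mul_eq_zero.mp ham with h | h
          · exact absurd h ha0
          · exact h
        have hfz : ∀ᵐ x ∂μ, f x = 0 := by
          have := (integral_eq_zero_iff_of_nonneg hf_nonneg hintf).mp (by rw [← hm]; exact hm00)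
          exact this
        have hnull : μ {x | t ≤ f x - m} = 0 := by
          refine measure_mono_null (fun x hx => ?_) (by rw [ae_iff] at hfz; exact hfz)
          simp only [Set.mem_setOf_eq] at hx ⊢
          intro h
          rw [h, hm00] at hx
          linarith
        rw [hnull]
        simp only [ENNReal.toReal_zero]
        exact (Real.exp_pos _).le
    case pos =>
      have hvpos : 0 < ρ * (a * m + b) := mul_pos hρ hv
      have hden : 0 < 2 * (ρ * (a * m + b)) + ρ / 2 * a * t := by
        linarith [mul_pos hρ hv, mul_nonneg (mul_nonneg hρ.le ha) ht]
      set lam : ℝ := t / (2 * (ρ * (a * m + b)) + ρ / 2 * a * t) with hlamdef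
      have hlampos : 0 < lam := div_pos htpos hden
      have hrel : lam * (2 * (ρ * (a * m + b)) + ρ / 2 * a * t) = t := by
        rw [hlamdef]; exact div_mul_cancel₀ _ hden.ne'
      have hclam : ρ / 2 * a * lam < 1 := by
        rw [hlamdef]
        have e : ρ / 2 * a * (t / (2 * (ρ * (a * m + b)) + ρ / 2 * a * t))
            = (ρ / 2 * a * t) / (2 * (ρ * (a * m + b)) + ρ / 2 * a * t) := by ring
        rw [e, div_lt_one hden]
        linarith [hvpos]
      have h1c : 0 < 1 - ρ / 2 * a * lam := by linarith
      have hDI : ∀ s, 0 < s → s ≤ lam →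
          s * (∫ x, f x * Real.exp (s * f x) ∂μ)
            - (∫ x, Real.exp (s * f x) ∂μ) * Real.log (∫ x, Real.exp (s * f x) ∂μ)
          ≤ s ^ 2 * ((ρ / 2 * a) * (∫ x, f x * Real.exp (s * f x) ∂μ)
              + (ρ / 2 * b) * (∫ x, Real.exp (s * f x) ∂μ)) := by
        intro s hs _
        obtain ⟨hg𝒜, hgΓ⟩ := hΓ_aff f hf s 0 hs.le
        have hgx : ∀ x, (fun x => s * f x + 0) x = s * f x := fun x => add_zero _
        have hgsq : ∀ x, Γ (fun x => s * f x + 0) x ^ 2 = s ^ 2 * Γ f x ^ 2 := by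
          intro x
          simp only [hgΓ]
          ring
        have h := hDIgen s _ hg𝒜 hgx hgsq
        linarith [h]
      have hKb := herbst_key μ hmf hBnn hB (ρ / 2 * a) (ρ / 2 * b) lam hlampos hint hDI
      rw [← hm] at hKb
      have hset : {x | t ≤ f x - m} = {x | m + t ≤ f x} := by
        ext x
        simp only [Set.mem_setOf_eq]
        constructor <;> intro h <;> linarith
      have hch := ProbabilityTheory.measure_ge_le_exp_cgf (μ := μ) (X := f) (m + t)
        hlampos.le (hint lam)
      rw [hset]
      refine hch.trans ?_
      rw [Real.exp_le_exp]
      have hcgf : ProbabilityTheory.cgf f μ lam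
          = Real.log (∫ x, Real.exp (lam * f x) ∂μ) := rfl
      rw [hcgf]
      set k := Real.log (∫ x, Real.exp (lam * f x) ∂μ) with hk
      have hKb2 : k * (1 - ρ / 2 * a * lam) ≤ lam * m + ρ / 2 * b * lam ^ 2 := by
        linarith [hKb]
      have hid : lam * m + ρ / 2 * b * lam ^ 2
          = (lam * m + lam * t / 4) * (1 - ρ / 2 * a * lam) := by
        linear_combination (lam / 4) * hrel
      have h3 : k ≤ lam * m + lam * t / 4 := by
        rw [hid] at hKb2
        exact le_of_mul_le_mul_right hKb2 h1c
      have hDpos : 0 < 2 * ρ * (2 * a * m + 2 * b + a * t / 3) := by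
        linarith [mul_pos hρ hv, mul_nonneg (mul_nonneg hρ.le ha) ht]
      have h5 : t ^ 2 / (2 * ρ * (2 * a * m + 2 * b + a * t / 3)) ≤ 3 / 4 * (lam * t) := by
        rw [div_le_iff₀ hDpos]
        have ht2 : lam * (2 * (ρ * (a * m + b)) + ρ / 2 * a * t) * t = t ^ 2 := by
          rw [hrel]; ring
        have h6 : 0 ≤ lam * t * (ρ * (a * m + b)) :=
          mul_nonneg (mul_nonneg hlampos.le htpos.le) hvpos.le
        linarith [ht2, h6]
      have h7 : -lam * (m + t) + k ≤ -(3 / 4 * (lam * t)) := by linarith [h3]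
      refine h7.trans ?_
      rw [neg_div]
      exact neg_le_neg h5
  · -- lower tail
    intro hlamhyp t ht htm
    rcases eq_or_lt_of_le ht with h0 | htpos
    · rw [← h0]
      norm_num
      exact htriv _
    have hmpos : 0 < m := lt_of_lt_of_le htpos htm
    by_cases hv : 0 < a * m + b
    case neg =>
      have hv0 : a * m + b = 0 :=
        le_antisymm (not_lt.mp hv) (add_nonneg (mul_nonneg ha hm0) hb)
      have hb0 : b = 0 := by linarith [mul_nonneg ha hm0]
      have ha0 : a = 0 := by
        have ham : a * m = 0 := by linarith
        rcases mul_eq_zero.mp ham with h | h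
        · exact h
        · exact absurd h (ne_of_gt hmpos)
      rw [ha0, hb0]
      norm_num
      exact htriv _
    case pos =>
      have hvpos : 0 < ρ * (a * m + b) := mul_pos hρ hv
      set lam : ℝ := t / (ρ * (a * m + b)) with hlamdef
      have hlampos : 0 < lam := div_pos htpos hvpos
      have hrel : lam * (ρ * (a * m + b)) = t := by
        rw [hlamdef]; exact div_mul_cancel₀ _ hvpos.ne'
      have hB' : ∀ x, |(fun x => -f x) x| ≤ B := fun x => by
        simp only [abs_neg]; exact hB x
      have hint' : ∀ s : ℝ, Integrable (fun x => Real.exp (s * -f x)) μ :=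
        fun s => herbst_int_exp hmf.neg hB' s
      have hDIneg : ∀ s, 0 < s → s ≤ lam →
          s * (∫ x, -f x * Real.exp (s * -f x) ∂μ)
            - (∫ x, Real.exp (s * -f x) ∂μ) * Real.log (∫ x, Real.exp (s * -f x) ∂μ)
          ≤ s ^ 2 * ((-(ρ / 2 * a)) * (∫ x, -f x * Real.exp (s * -f x) ∂μ)
              + (ρ / 2 * b) * (∫ x, Real.exp (s * -f x) ∂μ)) := by
        intro s hs _
        obtain ⟨hg𝒜, hgΓ⟩ := hlamhyp (-s)
        have hgx : ∀ x, (fun x => -s * f x) x = -s * f x := fun _ => rfl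
        have hgsq : ∀ x, Γ (fun x => -s * f x) x ^ 2 = (-s) ^ 2 * Γ f x ^ 2 := by
          intro x
          simp only [hgΓ]
          rw [mul_pow, sq_abs]
        have h := hDIgen (-s) _ hg𝒜 hgx hgsq
        have e1 : (∫ x, f x * Real.exp (-s * f x) ∂μ)
            = -∫ x, -f x * Real.exp (s * -f x) ∂μ := by
          rw [← integral_neg]
          congr 1; funext x
          rw [show s * -f x = -s * f x by ring]
          ring
        have e2 : (∫ x, Real.exp (-s * f x) ∂μ) = ∫ x, Real.exp (s * -f x) ∂μ := by
          congr 1; funext x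
          rw [show s * -f x = -s * f x by ring]
        rw [e1, e2] at h
        linarith [h]
      have hKb := herbst_key μ (f := fun x => -f x) hmf.neg hBnn hB' (-(ρ / 2 * a)) (ρ / 2 * b) lam hlampos
        hint' hDIneg
      have e3 : (∫ x, Real.exp (lam * -f x) ∂μ) = ∫ x, Real.exp (-lam * f x) ∂μ := by
        congr 1; funext x
        rw [show lam * -f x = -lam * f x by ring]
      have e4 : (∫ x, -f x ∂μ) = -m := by
        rw [integral_neg, ← hm]
      rw [e3, e4] at hKb
      set k := Real.log (∫ x, Real.exp (-lam * f x) ∂μ) with hk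
      have hJ : -lam * m ≤ k := by
        have := herbst_jensen μ hintf (s := -lam) (hint (-lam))
        rw [← hm] at this
        exact this
      have hkb2 : k ≤ -lam * m + ρ / 2 * (a * m + b) * lam ^ 2 := by
        have hh : 0 ≤ ρ / 2 * a * lam * (k + lam * m) :=
          mul_nonneg (by positivity) (by linarith)
        linarith [hKb, hh]
      have hset : {x | t ≤ m - f x} = {x | f x ≤ m - t} := by
        ext x
        simp only [Set.mem_setOf_eq]
        constructor <;> intro h <;> linarith
      have hch := ProbabilityTheory.measure_le_le_exp_cgf (μ := μ) (X := f) (m - t)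
        (neg_nonpos.mpr hlampos.le) (hint (-lam))
      rw [hset]
      refine hch.trans ?_
      rw [Real.exp_le_exp]
      have hcgf : ProbabilityTheory.cgf f μ (-lam) = k := rfl
      rw [hcgf]
      have he : ρ / 2 * (a * m + b) * lam ^ 2 = lam * t / 2 := by
        linear_combination (lam / 2) * hrel
      have hexp : -(-lam) * (m - t) + k ≤ -(lam * t) / 2 := by
        linarith [hkb2, he]
      refine hexp.trans ?_
      have hD2 : 2 * (ρ * (a * m + b)) ≤ 2 * ρ * (2 * a * m + 2 * b + a * t / 3) := by
        linarith [mul_pos hρ hv, mul_nonneg (mul_nonneg hρ.le ha) ht]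
      have he2 : -(lam * t) / 2 = -t ^ 2 / (2 * (ρ * (a * m + b))) := by
        rw [hlamdef]
        field_simp
      rw [he2, neg_div, neg_div, neg_le_neg_iff]
      exact div_le_div_of_nonneg_left (sq_nonneg t) (by positivity) hD2
end

section
/- Let d, n ∈ ℕ with n > d, and let X₁, …, X_n be independent, identically distributed random variables with values in [0,1] and mean η = E X₁ > 0. Define f_d(X) = Σ_{i=1}^n X_i·X_{i+1}⋯X_{i+d−1}, where indices are understood modulo n. Then for any t ≥ 0, P(f_d(X) − E f_d(X) ≥ √(n·η^d)·t) ≤ 2·exp(−t²/(2d²·(1 + t/√(n·η^d)))). -/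
open MeasureTheory Finset ProbabilityTheory

lemma two_mul_le_log_ineq {u : ℝ} (hu : 0 ≤ u) :
    2 * u ≤ (2 + u) * Real.log (1 + u) := by
  set h : ℝ → ℝ := fun x => (2 + x) * Real.log (1 + x) - 2 * x with hh
  have hderiv : ∀ x : ℝ, 0 ≤ x →
      HasDerivAt h (Real.log (1 + x) + (2 + x) * (1 / (1 + x)) - 2) x := by
    intro x hx
    have h1 : HasDerivAt (fun u : ℝ => 1 + u) 1 x := by
      simpa using (hasDerivAt_id x).const_add (1:ℝ)
    have hlog : HasDerivAt (fun u : ℝ => Real.log (1 + u)) (1 / (1 + x)) x := by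
      simpa using h1.log (by positivity)
    have h2 : HasDerivAt (fun u : ℝ => 2 + u) 1 x := by
      simpa using (hasDerivAt_id x).const_add (2:ℝ)
    have h3 := h2.mul hlog
    have h4 := h3.sub ((hasDerivAt_id x).const_mul (2:ℝ))
    have e1 : h = ((fun u => 2 + u) * fun u => Real.log (1 + u)) - fun y => 2 * id y := by
      funext y; simp only [hh, Pi.mul_apply, Pi.sub_apply, id]
    have e2 : Real.log (1 + x) + (2 + x) * (1 / (1 + x)) - 2
        = 1 * Real.log (1 + x) + (2 + x) * (1 / (1 + x)) - 2 * 1 := by ring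
    rw [e1, e2]; exact h4
  have hd0 : ∀ x : ℝ, 0 ≤ x → 0 ≤ Real.log (1 + x) + (2 + x) * (1 / (1 + x)) - 2 := by
    intro x hx
    have hpos : (0:ℝ) < 1 + x := by linarith
    have hlog : Real.log (1 + x) ≥ 1 - 1/(1+x) := by
      have := Real.log_le_sub_one_of_pos (x := (1+x)⁻¹) (by positivity)
      rw [Real.log_inv] at this
      have : -Real.log (1+x) ≤ (1+x)⁻¹ - 1 := this
      have h : 1 - (1+x)⁻¹ ≤ Real.log (1+x) := by linarith
      simpa [one_div] using h
    have key : (2 + x) * (1 / (1 + x)) = 2 - x / (1+x) := by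
      field_simp
      ring
    rw [key]
    have h2 : x / (1+x) = 1 - 1/(1+x) := by field_simp; ring
    rw [h2]
    linarith
  have hmono : MonotoneOn h (Set.Ici (0:ℝ)) := by
    apply monotoneOn_of_deriv_nonneg (convex_Ici 0)
    · apply ContinuousOn.sub
      · apply ContinuousOn.mul (by fun_prop)
        apply ContinuousOn.log (by fun_prop)
        intro x hx
        have : (0:ℝ) ≤ x := hx
        positivity
      · fun_prop
    · intro x hx
      rw [interior_Ici] at hx
      exact ((hderiv x (le_of_lt hx)).differentiableAt).differentiableWithinAt
    · intro x hx
      rw [interior_Ici] at hx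
      rw [(hderiv x (le_of_lt hx)).deriv]
      exact hd0 x (le_of_lt hx)
  have h0 : h 0 = 0 := by simp [hh]
  have := hmono (Set.self_mem_Ici) (a := (0:ℝ)) (by exact hu) hu
  rw [h0] at this
  simp only [hh] at this
  linarith


lemma exp_mul_le_of_mem_Icc {y θ : ℝ} (h0 : 0 ≤ y) (h1 : y ≤ 1) :
    Real.exp (θ * y) ≤ 1 + y * (Real.exp θ - 1) := by
  have h := convexOn_exp.2 (Set.mem_univ (0:ℝ)) (Set.mem_univ θ)
    (by linarith : (0:ℝ) ≤ 1 - y) h0 (by ring)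
  simp only [smul_eq_mul, mul_zero, Real.exp_zero, mul_one] at h
  calc Real.exp (θ * y) = Real.exp ((1-y) * 0 + y * θ) := by ring_nf
    _ ≤ (1-y) * 1 + y * Real.exp θ := by simpa using h
    _ = 1 + y * (Real.exp θ - 1) := by ring


lemma exponent_bound_aux {M r θ dm mm : ℝ} (hM0 : 0 < M) (hr0 : 0 ≤ r)
    (hθ : θ = Real.log (1 + r / M)) (hd : 0 < dm) (hm : 0 < mm) (hmd : mm ≤ dm ^ 2) :
    (r - (M + r) * θ) / mm ≤ -r ^ 2 / (2 * dm ^ 2 * (M + r)) := by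
  have hrM0 : 0 ≤ r / M := div_nonneg hr0 hM0.le
  have hθL : 2 * r ≤ (2 * M + r) * θ := by
    have h := two_mul_le_log_ineq hrM0
    rw [← hθ] at h
    have h2 := mul_le_mul_of_nonneg_left h hM0.le
    have e1 : M * (2 * (r / M)) = 2 * r := by field_simp
    have e2 : M * ((2 + r / M) * θ) = (2 * M + r) * θ := by
      field_simp
    rw [e1, e2] at h2
    exact h2
  have hA : r ^ 2 ≤ (2 * M + r) * ((M + r) * θ - r) := by
    nlinarith [mul_le_mul_of_nonneg_left hθL (by linarith : (0:ℝ) ≤ M + r)]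
  have hX0 : 0 ≤ (M + r) * θ - r := by nlinarith
  have hB : mm * (2 * M + r) ≤ 2 * dm ^ 2 * (M + r) := by nlinarith
  have hC : mm * r ^ 2 ≤ 2 * dm ^ 2 * (M + r) * ((M + r) * θ - r) := by
    calc mm * r ^ 2 ≤ mm * ((2 * M + r) * ((M + r) * θ - r)) :=
          mul_le_mul_of_nonneg_left hA hm.le
      _ = (mm * (2 * M + r)) * ((M + r) * θ - r) := by ring
      _ ≤ 2 * dm ^ 2 * (M + r) * ((M + r) * θ - r) :=
          mul_le_mul_of_nonneg_right hB hX0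
  rw [div_le_div_iff₀ hm (by positivity : (0:ℝ) < 2 * dm ^ 2 * (M + r))]
  nlinarith [hC]

set_option maxHeartbeats 1000000 in
/-- **Concentration for the `d`-runs statistic on the cycle of length `n`**
(Sambale–Sinulis, Proposition 13). -/
theorem d_runs_concentration
    {Ω : Type*} [MeasurableSpace Ω] (P : Measure Ω) [IsProbabilityMeasure P]
    (d n : ℕ) (hdn : d < n)
    (X : Fin n → Ω → ℝ) (hX_meas : ∀ i, Measurable (X i))
    (hX_range : ∀ i ω, X i ω ∈ Set.Icc (0 : ℝ) 1)
    (hX_indep : ProbabilityTheory.iIndepFun X P)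
    (hX_ident : ∀ i j, Measure.map (X i) P = Measure.map (X j) P)
    (η : ℝ) (hη : 0 < η) (hmean : ∀ i, ∫ ω, X i ω ∂P = η)
    -- the d-runs statistic with indices taken modulo n
    (f : Ω → ℝ)
    (hf : f = fun ω => ∑ i : Fin n, ∏ k ∈ Finset.range d,
      X ⟨((i : ℕ) + k) % n, Nat.mod_lt _ (Nat.lt_of_le_of_lt (Nat.zero_le d) hdn)⟩ ω) :
    ∀ t : ℝ, 0 ≤ t →
      (P {ω | Real.sqrt (n * η ^ d) * t ≤ f ω - ∫ ω', f ω' ∂P}).toReal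
        ≤ 2 * Real.exp (-t ^ 2 /
            (2 * d ^ 2 * (1 + t / Real.sqrt (n * η ^ d)))) := by
  intro t ht
  have hn0 : 0 < n := Nat.lt_of_le_of_lt (Nat.zero_le d) hdn
  have hprob : ∀ s : Set Ω, (P s).toReal ≤ 1 := by
    intro s
    have h := prob_le_one (μ := P) (s := s)
    simpa using ENNReal.toReal_mono ENNReal.one_ne_top h
  set M : ℝ := (n : ℝ) * η ^ d with hM
  have hM0 : 0 < M := mul_pos (by exact_mod_cast hn0) (pow_pos hη d)
  have hs0 : 0 < Real.sqrt M := Real.sqrt_pos.mpr hM0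
  set r : ℝ := Real.sqrt M * t with hr
  have hr0 : 0 ≤ r := mul_nonneg hs0.le ht
  rcases Nat.eq_zero_or_pos d with hd0 | hd1
  · subst hd0
    have : 2 * (0:ℝ) ^ 2 * (1 + t / Real.sqrt M) = 0 := by ring
    calc (P _).toReal ≤ 1 := hprob _
      _ ≤ 2 * Real.exp (-t ^ 2 / (2 * (0:ℕ) ^ 2 * (1 + t / Real.sqrt M))) := by
          push_cast
          rw [this, div_zero, Real.exp_zero]
          norm_num
  -- main case
  have hd0R : (0:ℝ) < (d:ℝ) := by exact_mod_cast hd1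
  -- rewrite the target exponent
  have hkey : -t ^ 2 / (2 * (d:ℝ) ^ 2 * (1 + t / Real.sqrt M))
      = -r ^ 2 / (2 * (d:ℝ) ^ 2 * (M + r)) := by
    set s : ℝ := Real.sqrt M with hss
    have hsne : s ≠ 0 := ne_of_gt hs0
    have hM' : M = s ^ 2 := (Real.sq_sqrt hM0.le).symm
    rw [hr, hM']
    have hpos1 : 0 < 2 * (d:ℝ) ^ 2 * (1 + t / s) := by
      have : 0 < 1 + t / s := by positivity
      positivity
    have hpos2 : 0 < 2 * (d:ℝ) ^ 2 * (s ^ 2 + s * t) := by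
      have : 0 < s ^ 2 + s * t := by positivity
      positivity
    rw [div_eq_div_iff hpos1.ne' hpos2.ne']
    field_simp
  -- windows
  have hinj : ∀ i : ℕ, ∀ k ∈ range d, ∀ k' ∈ range d,
      (⟨(i + k) % n, Nat.mod_lt _ hn0⟩ : Fin n) = ⟨(i + k') % n, Nat.mod_lt _ hn0⟩ → k = k' := by
    intro i k hk k' hk' he
    simp only [Fin.mk.injEq] at he
    simp only [mem_range] at hk hk'
    have hmod : k % n = k' % n := Nat.ModEq.add_left_cancel' i he
    rwa [Nat.mod_eq_of_lt (lt_of_lt_of_le hk hdn.le),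
      Nat.mod_eq_of_lt (lt_of_lt_of_le hk' hdn.le)] at hmod
  set W : ℕ → Finset (Fin n) :=
    fun i => (range d).image (fun k => (⟨(i + k) % n, Nat.mod_lt _ hn0⟩ : Fin n)) with hW
  set Y : ℕ → Ω → ℝ := fun i ω => ∏ j ∈ W i, X j ω with hY
  have hWcard : ∀ i, (W i).card = d := by
    intro i
    rw [hW, card_image_of_injOn (fun k hk k' hk' => hinj i k hk k' hk'), card_range]
  have hfY : ∀ ω, f ω = ∑ i ∈ range n, Y i ω := by
    intro ω
    rw [hf, ← Fin.sum_univ_eq_sum_range (fun i => Y i ω) n]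
    refine Finset.sum_congr rfl fun i _ => ?_
    simp only [hY, hW]
    rw [Finset.prod_image (fun k hk k' hk' => hinj (↑i) k hk k' hk')]
  have hY0 : ∀ i ω, 0 ≤ Y i ω := fun i ω => Finset.prod_nonneg fun j _ => (hX_range j ω).1
  have hY1 : ∀ i ω, Y i ω ≤ 1 :=
    fun i ω => Finset.prod_le_one (fun j _ => (hX_range j ω).1) (fun j _ => (hX_range j ω).2)
  have hYmeas : ∀ i, Measurable (Y i) := fun i => Finset.measurable_prod _ fun j _ => hX_meas j
  have hbdd : ∀ (g : Ω → ℝ) (C : ℝ), Measurable g → (∀ ω, |g ω| ≤ C) → Integrable g P := by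
    intro g C hm hb
    exact (integrable_const C).mono' hm.aestronglyMeasurable
      (ae_of_all _ fun ω => by simpa [Real.norm_eq_abs] using hb ω)
  have hYint : ∀ i, Integrable (Y i) P := fun i =>
    hbdd (Y i) 1 (hYmeas i) fun ω => abs_le.mpr ⟨by linarith [hY0 i ω], hY1 i ω⟩
  -- expectation of products over finsets of the X's
  have hprodX : ∀ T : Finset (Fin n), ∫ ω, ∏ j ∈ T, X j ω ∂P = η ^ T.card := by
    intro T
    induction T using Finset.induction_on with
    | empty => simp
    | @insert a s ha ih =>
      have hindep : IndepFun (∏ j ∈ s, X j) (X a) P :=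
        hX_indep.indepFun_finset_prod_of_notMem hX_meas ha
      have hPnn : 0 ≤ (∏ j ∈ s, X j : Ω → ℝ) := by
        intro ω
        rw [Finset.prod_apply]
        exact Finset.prod_nonneg fun j _ => (hX_range j ω).1
      have hmeasP : Measurable (∏ j ∈ s, X j : Ω → ℝ) := by
        have h := Finset.measurable_prod s fun j _ => hX_meas j
        have he : (∏ j ∈ s, X j : Ω → ℝ) = fun ω => ∏ j ∈ s, X j ω :=
          funext fun ω => Finset.prod_apply ω s X
        rw [he]
        exact h
      have hmul := hindep.integral_mul_eq_mul_integral
        hmeasP.aestronglyMeasurable (hX_meas a).aestronglyMeasurable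
      calc ∫ ω, ∏ j ∈ insert a s, X j ω ∂P
          = ∫ ω, ((∏ j ∈ s, X j) * X a) ω ∂P := by
            refine integral_congr_ae (ae_of_all _ fun ω => ?_)
            simp [Finset.prod_insert ha, Finset.prod_apply, mul_comm]
        _ = (∫ ω, (∏ j ∈ s, X j) ω ∂P) * ∫ ω, X a ω ∂P := hmul
        _ = η ^ s.card * η := by
            rw [hmean a]
            congr 1
            calc ∫ ω, (∏ j ∈ s, X j) ω ∂P = ∫ ω, ∏ j ∈ s, X j ω ∂P := by
                  refine integral_congr_ae (ae_of_all _ fun ω => ?_)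
                  rw [Finset.prod_apply]
              _ = η ^ s.card := ih
        _ = η ^ (insert a s).card := by rw [Finset.card_insert_of_notMem ha]; ring
  have hEY : ∀ i, ∫ ω, Y i ω ∂P = η ^ d := by
    intro i
    calc ∫ ω, Y i ω ∂P = η ^ (W i).card := hprodX (W i)
      _ = η ^ d := by rw [hWcard]
  -- the grouping
  set m : ℕ := 2 * d - 1 with hm
  have hm1 : 1 ≤ m := by omega
  have hmdR : (m:ℝ) ≤ (d:ℝ) ^ 2 := by
    have h2 : (m:ℝ) = 2*(d:ℝ) - 1 := by
      rw [hm]; push_cast [Nat.cast_sub (by omega : 1 ≤ 2*d)]; ring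
    nlinarith [sq_nonneg ((d:ℝ) - 1)]
  have hmR : (0:ℝ) < (m:ℝ) := by exact_mod_cast hm1
  set c : ℕ → ℕ := fun i => if i + d ≤ n then i % d else d + (i + d - n) - 1 with hc
  have hcm : ∀ i ∈ range n, c i ∈ range m := by
    intro i hi
    simp only [mem_range] at hi ⊢
    rw [hc]
    by_cases h : i + d ≤ n
    · simp only [h, if_true]
      have := Nat.mod_lt i hd1
      omega
    · simp only [h, if_false]
      omega
  -- membership of non-wrapping windows
  have hWmem : ∀ i, i + d ≤ n → ∀ j : Fin n, j ∈ W i → i ≤ (j:ℕ) ∧ (j:ℕ) < i + d := by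
    intro i hid j hj
    rw [hW, Finset.mem_image] at hj
    obtain ⟨k, hk, rfl⟩ := hj
    simp only [mem_range] at hk
    have : (i + k) % n = i + k := Nat.mod_eq_of_lt (by omega)
    simp only [this]
    omega
  have hdisj : ∀ i ∈ range n, ∀ i' ∈ range n, i ≠ i' → c i = c i' →
      Disjoint (W i) (W i') := by
    have key : ∀ a b : ℕ, a < b → a % d = b % d → a + d ≤ n → b + d ≤ n →
        Disjoint (W a) (W b) := by
      intro a b hab hmod han hbn
      rw [Finset.disjoint_left]
      intro j hja hjb
      obtain ⟨h1, h2⟩ := hWmem a han j hja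
      obtain ⟨h3, h4⟩ := hWmem b hbn j hjb
      have hdvd : d ∣ b - a := (Nat.modEq_iff_dvd' hab.le).mp hmod
      have : d ≤ b - a := Nat.le_of_dvd (by omega) hdvd
      omega
    intro i hi i' hi' hne hcc
    simp only [mem_range] at hi hi'
    rw [hc] at hcc
    by_cases h1 : i + d ≤ n <;> by_cases h2 : i' + d ≤ n
    · simp only [h1, h2, if_true] at hcc
      rcases Nat.lt_or_ge i i' with h | h
      · exact key i i' h hcc h1 h2
      · exact (key i' i (by omega) hcc.symm h2 h1).symm
    · exfalso
      simp only [h1, h2, if_true, if_false] at hcc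
      have := Nat.mod_lt i hd1
      omega
    · exfalso
      simp only [h1, h2, if_true, if_false] at hcc
      have := Nat.mod_lt i' hd1
      omega
    · exfalso
      simp only [h1, h2, if_false] at hcc
      omega
  set S : ℕ → Ω → ℝ := fun q ω => ∑ i ∈ (range n).filter (fun i => c i = q), Y i ω with hS
  have hfS : ∀ ω, f ω = ∑ q ∈ range m, S q ω := by
    intro ω
    rw [hfY ω, hS]
    exact (Finset.sum_fiberwise_of_maps_to hcm _).symm
  -- Chernoff parameters
  set θ : ℝ := Real.log (1 + r / M) with hθ
  have hrM0 : 0 ≤ r / M := div_nonneg hr0 hM0.le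
  have hθ0 : 0 ≤ θ := Real.log_nonneg (by linarith)
  have hexpθ : Real.exp θ = 1 + r / M := Real.exp_log (by linarith)
  have hexpθ1 : 1 ≤ Real.exp θ := Real.one_le_exp hθ0
  set lam : ℝ := θ / m with hlam
  have hlam0 : 0 ≤ lam := div_nonneg hθ0 hmR.le
  -- measurability and integrability of f
  have hfmeas : Measurable f := by
    have : f = fun ω => ∑ i ∈ range n, Y i ω := funext hfY
    rw [this]
    exact Finset.measurable_sum _ fun i _ => hYmeas i
  have hf0 : ∀ ω, 0 ≤ f ω := by
    intro ω
    rw [hfY ω]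
    exact Finset.sum_nonneg fun i _ => hY0 i ω
  have hfn : ∀ ω, f ω ≤ n := by
    intro ω
    rw [hfY ω]
    calc ∑ i ∈ range n, Y i ω ≤ ∑ i ∈ range n, 1 :=
          Finset.sum_le_sum fun i _ => hY1 i ω
      _ = n := by simp
  have hEf : ∫ ω, f ω ∂P = M := by
    have h1 : ∫ ω, f ω ∂P = ∫ ω, ∑ i ∈ range n, Y i ω ∂P :=
      integral_congr_ae (ae_of_all _ hfY)
    rw [h1, integral_finset_sum _ fun i _ => hYint i]
    simp only [hEY]
    rw [Finset.sum_const, card_range, nsmul_eq_mul, hM]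
  -- the mgf-type bound
  have hcore : ∫ ω, Real.exp (lam * f ω) ∂P ≤ Real.exp (M / m * (Real.exp θ - 1)) := by
    have hmne : (m:ℝ) ≠ 0 := hmR.ne'
    set a : ℝ := η ^ d * (Real.exp θ - 1) with ha
    have ha0 : 0 ≤ a := mul_nonneg (pow_pos hη d).le (by linarith)
    have hSmeas : ∀ q, Measurable (S q) := by
      intro q
      rw [hS]
      exact Finset.measurable_sum _ fun i _ => hYmeas i
    have hEmeas : ∀ (g : Ω → ℝ), Measurable g →
        Measurable fun ω => ENNReal.ofReal (Real.exp (θ * g ω)) :=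
      fun g hg => ENNReal.measurable_ofReal.comp (Real.measurable_exp.comp (hg.const_mul θ))
    -- single-window mgf bound
    have hwin : ∀ i : ℕ, ∫⁻ ω, ENNReal.ofReal (Real.exp (θ * Y i ω)) ∂P
        ≤ ENNReal.ofReal (Real.exp a) := by
      intro i
      have hint1 : Integrable (fun ω => 1 + Y i ω * (Real.exp θ - 1)) P := by
        apply hbdd _ (1 + (Real.exp θ - 1))
        · exact measurable_const.add ((hYmeas i).mul_const _)
        · intro ω
          rw [abs_of_nonneg (by nlinarith [hY0 i ω])]
          nlinarith [hY1 i ω, hY0 i ω]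
      calc ∫⁻ ω, ENNReal.ofReal (Real.exp (θ * Y i ω)) ∂P
          ≤ ∫⁻ ω, ENNReal.ofReal (1 + Y i ω * (Real.exp θ - 1)) ∂P := by
            refine lintegral_mono fun ω => ?_
            exact ENNReal.ofReal_le_ofReal (exp_mul_le_of_mem_Icc (hY0 i ω) (hY1 i ω))
        _ = ENNReal.ofReal (∫ ω, (1 + Y i ω * (Real.exp θ - 1)) ∂P) :=
            (ofReal_integral_eq_lintegral_ofReal hint1
              (ae_of_all _ fun ω => by
                simp only [Pi.zero_apply]
                nlinarith [hY0 i ω])).symm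
        _ = ENNReal.ofReal (1 + η ^ d * (Real.exp θ - 1)) := by
            rw [integral_add (integrable_const 1) ((hYint i).mul_const _),
              integral_const, integral_mul_const, hEY i]
            simp
        _ ≤ ENNReal.ofReal (Real.exp a) := by
            apply ENNReal.ofReal_le_ofReal
            rw [ha]
            linarith [Real.add_one_le_exp (η ^ d * (Real.exp θ - 1))]
    -- factorization over a group of pairwise disjoint windows
    have hgroup : ∀ G : Finset ℕ, ((G : Set ℕ).Pairwise fun i i' => Disjoint (W i) (W i')) →
        ∫⁻ ω, ENNReal.ofReal (Real.exp (θ * ∑ i ∈ G, Y i ω)) ∂P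
          = ∏ i ∈ G, ∫⁻ ω, ENNReal.ofReal (Real.exp (θ * Y i ω)) ∂P := by
      intro G
      induction G using Finset.induction_on with
      | empty => intro _; simp
      | @insert b G hb ih =>
        intro hpw
        have hpwG : (G : Set ℕ).Pairwise fun i i' => Disjoint (W i) (W i') :=
          hpw.mono (by exact_mod_cast Finset.coe_subset.mpr (Finset.subset_insert b G))
        have hdisjbG : Disjoint (W b) (G.biUnion W) := by
          rw [Finset.disjoint_biUnion_right]
          intro i hi
          refine hpw (by simp) (by simp [hi]) ?_
          rintro rfl; exact hb hi
        have base := hX_indep.indepFun_finset (W b) (G.biUnion W) hdisjbG hX_meas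
        have hφ₁ : Measurable (fun v : ({x // x ∈ W b} → ℝ) =>
            ENNReal.ofReal (Real.exp (θ * ∏ j ∈ (W b).attach, v j))) := by
          refine ENNReal.measurable_ofReal.comp (Real.measurable_exp.comp ?_)
          exact (Finset.measurable_prod _ fun j _ => measurable_pi_apply j).const_mul θ
        have hφ₂ : Measurable (fun v : ({x // x ∈ G.biUnion W} → ℝ) =>
            ENNReal.ofReal (Real.exp (θ * ∑ i ∈ G.attach,
              ∏ j ∈ (W i.1).attach, v ⟨j.1, Finset.mem_biUnion.mpr ⟨i.1, i.2, j.2⟩⟩))) := by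
          refine ENNReal.measurable_ofReal.comp (Real.measurable_exp.comp ?_)
          refine Measurable.const_mul ?_ θ
          refine Finset.measurable_sum _ fun i _ => ?_
          exact Finset.measurable_prod _ fun j _ => measurable_pi_apply _
        have hcomp := base.comp hφ₁ hφ₂
        have he1 : (fun ω => ENNReal.ofReal (Real.exp (θ * Y b ω)))
            = (fun v : ({x // x ∈ W b} → ℝ) =>
                ENNReal.ofReal (Real.exp (θ * ∏ j ∈ (W b).attach, v j)))
              ∘ (fun ω (i : {x // x ∈ W b}) => X i.1 ω) := by
          funext ω
          simp only [Function.comp_apply, hY]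
          rw [Finset.prod_attach (W b) (fun j => X j ω)]
        have he2 : (fun ω => ENNReal.ofReal (Real.exp (θ * ∑ i ∈ G, Y i ω)))
            = (fun v : ({x // x ∈ G.biUnion W} → ℝ) =>
                ENNReal.ofReal (Real.exp (θ * ∑ i ∈ G.attach,
                  ∏ j ∈ (W i.1).attach, v ⟨j.1, Finset.mem_biUnion.mpr ⟨i.1, i.2, j.2⟩⟩)))
              ∘ (fun ω (i : {x // x ∈ G.biUnion W}) => X i.1 ω) := by
          funext ω
          simp only [Function.comp_apply]
          have hsplit : (∑ i ∈ G, Y i ω)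
              = ∑ i ∈ G.attach, ∏ j ∈ (W i.1).attach, X j.1 ω := by
            rw [← Finset.sum_attach G (fun i => Y i ω)]
            refine Finset.sum_congr rfl fun i _ => ?_
            simp only [hY]
            rw [Finset.prod_attach (W i.1) (fun j => X j ω)]
          rw [hsplit]
        have hIF : IndepFun (fun ω => ENNReal.ofReal (Real.exp (θ * Y b ω)))
            (fun ω => ENNReal.ofReal (Real.exp (θ * ∑ i ∈ G, Y i ω))) P := by
          rw [he1, he2]
          exact hcomp
        have hm1' : Measurable fun ω => ENNReal.ofReal (Real.exp (θ * Y b ω)) :=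
          hEmeas _ (hYmeas b)
        have hm2' : Measurable fun ω => ENNReal.ofReal (Real.exp (θ * ∑ i ∈ G, Y i ω)) :=
          hEmeas _ (Finset.measurable_sum _ fun i _ => hYmeas i)
        calc ∫⁻ ω, ENNReal.ofReal (Real.exp (θ * ∑ i ∈ insert b G, Y i ω)) ∂P
            = ∫⁻ ω, ((fun ω => ENNReal.ofReal (Real.exp (θ * Y b ω)))
                * fun ω => ENNReal.ofReal (Real.exp (θ * ∑ i ∈ G, Y i ω))) ω ∂P := by
              refine lintegral_congr fun ω => ?_
              simp only [Pi.mul_apply]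
              rw [Finset.sum_insert hb, ← ENNReal.ofReal_mul (Real.exp_pos _).le,
                ← Real.exp_add, mul_add]
          _ = (∫⁻ ω, ENNReal.ofReal (Real.exp (θ * Y b ω)) ∂P)
                * ∫⁻ ω, ENNReal.ofReal (Real.exp (θ * ∑ i ∈ G, Y i ω)) ∂P :=
              lintegral_mul_eq_lintegral_mul_lintegral_of_indepFun hm1' hm2' hIF
          _ = ∏ i ∈ insert b G, ∫⁻ ω, ENNReal.ofReal (Real.exp (θ * Y i ω)) ∂P := by
              rw [ih hpwG, Finset.prod_insert hb]
    -- integrability of exp (lam * f)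
    have hintexp : Integrable (fun ω => Real.exp (lam * f ω)) P := by
      apply hbdd _ (Real.exp (lam * n))
      · exact Real.measurable_exp.comp (hfmeas.const_mul lam)
      · intro ω
        rw [abs_of_pos (Real.exp_pos _), Real.exp_le_exp]
        exact mul_le_mul_of_nonneg_left (hfn ω) hlam0
    have h1 : ENNReal.ofReal (∫ ω, Real.exp (lam * f ω) ∂P)
        = ∫⁻ ω, ENNReal.ofReal (Real.exp (lam * f ω)) ∂P :=
      ofReal_integral_eq_lintegral_ofReal hintexp (ae_of_all _ fun ω => (Real.exp_pos _).le)
    set k : ℕ → ℕ := fun q => ((range n).filter fun i => c i = q).card with hk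
    have hsumk : ∑ q ∈ range m, k q = n := by
      calc ∑ q ∈ range m, k q = (range n).card :=
            (Finset.card_eq_sum_card_fiberwise hcm).symm
        _ = n := card_range n
    have hgrpb : ∀ q ∈ range m,
        (∫⁻ ω, ENNReal.ofReal (Real.exp (θ * S q ω)) ∂P) ^ ((m:ℝ)⁻¹)
          ≤ ENNReal.ofReal (Real.exp (a * k q * (m:ℝ)⁻¹)) := by
      intro q _
      have hpw : (((range n).filter fun i => c i = q : Finset ℕ) : Set ℕ).Pairwise
          fun i i' => Disjoint (W i) (W i') := by
        intro i hi i' hi' hne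
        simp only [Finset.coe_filter, Set.mem_setOf_eq, Finset.mem_range] at hi hi'
        exact hdisj i (Finset.mem_range.mpr hi.1) i' (Finset.mem_range.mpr hi'.1) hne
          (by rw [hi.2, hi'.2])
      have heq : ∫⁻ ω, ENNReal.ofReal (Real.exp (θ * S q ω)) ∂P
          = ∏ i ∈ (range n).filter (fun i => c i = q),
              ∫⁻ ω, ENNReal.ofReal (Real.exp (θ * Y i ω)) ∂P := by
        simp only [hS]
        exact hgroup _ hpw
      rw [heq]
      calc (∏ i ∈ (range n).filter (fun i => c i = q),
              ∫⁻ ω, ENNReal.ofReal (Real.exp (θ * Y i ω)) ∂P) ^ ((m:ℝ)⁻¹)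
          ≤ (∏ _i ∈ (range n).filter (fun i => c i = q),
              ENNReal.ofReal (Real.exp a)) ^ ((m:ℝ)⁻¹) := by
            refine ENNReal.rpow_le_rpow ?_ (by positivity)
            exact Finset.prod_le_prod' fun i _ => hwin i
        _ = (ENNReal.ofReal (Real.exp a) ^ (k q)) ^ ((m:ℝ)⁻¹) := by
            rw [Finset.prod_const, hk]
        _ = ENNReal.ofReal (Real.exp (a * k q * (m:ℝ)⁻¹)) := by
            rw [← ENNReal.rpow_natCast (ENNReal.ofReal (Real.exp a)) (k q),
              ← ENNReal.rpow_mul, ENNReal.ofReal_rpow_of_pos (Real.exp_pos a),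
              ← Real.exp_mul]
            congr 2
            ring
    have hpoint : ∀ ω, ENNReal.ofReal (Real.exp (lam * f ω))
        = ∏ q ∈ range m, (ENNReal.ofReal (Real.exp (θ * S q ω))) ^ ((m:ℝ)⁻¹) := by
      intro ω
      have e1 : ∀ q : ℕ, (ENNReal.ofReal (Real.exp (θ * S q ω))) ^ ((m:ℝ)⁻¹)
          = ENNReal.ofReal (Real.exp (θ * S q ω * (m:ℝ)⁻¹)) := by
        intro q
        rw [ENNReal.ofReal_rpow_of_pos (Real.exp_pos _), ← Real.exp_mul]
      rw [Finset.prod_congr rfl (fun q _ => e1 q),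
        ← ENNReal.ofReal_prod_of_nonneg (fun q _ => (Real.exp_pos _).le),
        ← Real.exp_sum]
      congr 2
      rw [hfS ω, hlam, Finset.mul_sum]
      refine Finset.sum_congr rfl fun q _ => ?_
      ring
    have hhold := ENNReal.lintegral_prod_norm_pow_le (μ := P) (range m)
      (f := fun q ω => ENNReal.ofReal (Real.exp (θ * S q ω)))
      (fun q _ => (hEmeas _ (hSmeas q)).aemeasurable)
      (p := fun _ => (m:ℝ)⁻¹)
      (by rw [Finset.sum_const, card_range, nsmul_eq_mul]; exact mul_inv_cancel₀ hmne)
      (fun q _ => by positivity)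
    have htot : ∫⁻ ω, ENNReal.ofReal (Real.exp (lam * f ω)) ∂P
        ≤ ENNReal.ofReal (Real.exp (M / m * (Real.exp θ - 1))) := by
      calc ∫⁻ ω, ENNReal.ofReal (Real.exp (lam * f ω)) ∂P
          = ∫⁻ ω, ∏ q ∈ range m, (ENNReal.ofReal (Real.exp (θ * S q ω))) ^ ((m:ℝ)⁻¹) ∂P :=
            lintegral_congr hpoint
        _ ≤ ∏ q ∈ range m, (∫⁻ ω, ENNReal.ofReal (Real.exp (θ * S q ω)) ∂P) ^ ((m:ℝ)⁻¹) :=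
            hhold
        _ ≤ ∏ q ∈ range m, ENNReal.ofReal (Real.exp (a * k q * (m:ℝ)⁻¹)) :=
            Finset.prod_le_prod' hgrpb
        _ = ENNReal.ofReal (∏ q ∈ range m, Real.exp (a * k q * (m:ℝ)⁻¹)) :=
            (ENNReal.ofReal_prod_of_nonneg fun q _ => (Real.exp_pos _).le).symm
        _ = ENNReal.ofReal (Real.exp (∑ q ∈ range m, a * k q * (m:ℝ)⁻¹)) := by
            rw [Real.exp_sum]
        _ = ENNReal.ofReal (Real.exp (M / m * (Real.exp θ - 1))) := by
            congr 2
            have hcast : (∑ q ∈ range m, a * (k q : ℝ) * (m:ℝ)⁻¹)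
                = a * (n:ℝ) * (m:ℝ)⁻¹ := by
              rw [← Finset.sum_mul, ← Finset.mul_sum]
              have : (∑ q ∈ range m, (k q : ℝ)) = (n : ℝ) := by
                rw [← Nat.cast_sum, hsumk]
              rw [this]
            rw [hcast, ha, hM]
            ring
    rw [← ENNReal.ofReal_le_ofReal_iff (Real.exp_pos _).le, h1]
    exact htot
  -- integrability for Chernoff
  have hint : Integrable (fun ω => Real.exp (lam * (f ω - ∫ ω', f ω' ∂P))) P := by
    apply hbdd _ (Real.exp (lam * (n : ℝ)))
    · exact Real.measurable_exp.comp ((hfmeas.sub measurable_const).const_mul lam)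
    · intro ω
      rw [abs_of_pos (Real.exp_pos _), Real.exp_le_exp]
      have h1 : f ω - ∫ ω', f ω' ∂P ≤ (n : ℝ) := by
        rw [hEf]
        have := hfn ω
        linarith
      exact mul_le_mul_of_nonneg_left h1 hlam0
  have hcher := measure_ge_le_exp_mul_mgf (μ := P)
    (X := fun ω => f ω - ∫ ω', f ω' ∂P) (t := lam) r hlam0 hint
  have hmgf : mgf (fun ω => f ω - ∫ ω', f ω' ∂P) P lam
      = Real.exp (-lam * M) * ∫ ω, Real.exp (lam * f ω) ∂P := by
    rw [mgf]
    have heq : ∀ ω, Real.exp (lam * (f ω - ∫ ω', f ω' ∂P))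
        = Real.exp (-lam * M) * Real.exp (lam * f ω) := by
      intro ω
      rw [← Real.exp_add, hEf]
      ring_nf
    calc ∫ ω, Real.exp (lam * (f ω - ∫ ω', f ω' ∂P)) ∂P
        = ∫ ω, Real.exp (-lam * M) * Real.exp (lam * f ω) ∂P :=
          integral_congr_ae (ae_of_all _ heq)
      _ = Real.exp (-lam * M) * ∫ ω, Real.exp (lam * f ω) ∂P := integral_const_mul _ _
  -- the final exponent comparison
  have hexpb : -lam * r + (-lam * M + M / m * (Real.exp θ - 1))
      ≤ -r ^ 2 / (2 * (d:ℝ) ^ 2 * (M + r)) := by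
    have hMne : M ≠ 0 := hM0.ne'
    have h1 : M / m * (Real.exp θ - 1) = r / m := by
      rw [hexpθ]
      field_simp
      ring
    rw [h1, hlam]
    have h2 : -(θ / (m:ℝ)) * r + (-(θ / (m:ℝ)) * M + r / (m:ℝ))
        = (r - (M + r) * θ) / (m:ℝ) := by
      field_simp
      ring
    rw [h2]
    exact exponent_bound_aux hM0 hr0 hθ hd0R hmR hmdR
  -- assembling
  calc (P {ω | r ≤ f ω - ∫ ω', f ω' ∂P}).toReal
      ≤ Real.exp (-lam * r) * mgf (fun ω => f ω - ∫ ω', f ω' ∂P) P lam := hcher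
    _ = Real.exp (-lam * r) * (Real.exp (-lam * M) * ∫ ω, Real.exp (lam * f ω) ∂P) := by
        rw [hmgf]
    _ ≤ Real.exp (-lam * r) * (Real.exp (-lam * M) * Real.exp (M / m * (Real.exp θ - 1))) := by
        have := mul_le_mul_of_nonneg_left hcore (Real.exp_pos (-lam * M)).le
        exact mul_le_mul_of_nonneg_left this (Real.exp_pos (-lam * r)).le
    _ = Real.exp (-lam * r + (-lam * M + M / m * (Real.exp θ - 1))) := by
        rw [Real.exp_add, Real.exp_add]
    _ ≤ Real.exp (-r ^ 2 / (2 * (d:ℝ) ^ 2 * (M + r))) := Real.exp_le_exp.mpr hexpb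
    _ = Real.exp (-t ^ 2 / (2 * (d:ℝ) ^ 2 * (1 + t / Real.sqrt M))) := by rw [hkey]
    _ ≤ 2 * Real.exp (-t ^ 2 / (2 * (d:ℝ) ^ 2 * (1 + t / Real.sqrt M))) := by
        nlinarith [Real.exp_pos (-t ^ 2 / (2 * (d:ℝ) ^ 2 * (1 + t / Real.sqrt M)))]
end
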